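/- arXiv:1003.2556 — 2 statements merged into one kernel-verified Lean document; each statement's English description precedes it below -/
import Mathlib

section
/- For every k ∈ {1,...,n} and every f ∈ L²([0,1]^n), −(n+1)(n+2) ∫_{[0,1]^n} f(x)·(x_{(k+1)} − 2x_{(k)} + x_{(k−1)}) dx = (n+1)(n+2) ∫_{[0,1]^n} ∫_{x_{(k)}}^{x_{(k+1)}} ( f(x + (y − x_{(k)})·e_{π(k)}) − f(x) ) dy dx, where for x in the open simplex with x_{π(1)} < ... < x_{π(n)}, e_{π(k)} is the standard basis vector in the direction of the coordinate achieving the k-th order statistic. -/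
open MeasureTheory Finset

/-- The `k`-th order statistic of `x : Fin n → ℝ`, with conventions
`oStat x 0 = 0` and `oStat x k = 1` for `k > n`. For `1 ≤ k ≤ n` it is the
`k`-th smallest coordinate of `x`. -/
noncomputable def oStat {n : ℕ} (x : Fin n → ℝ) (k : ℕ) : ℝ :=
  if k = 0 then 0
  else if k ≤ n then ((Finset.univ.val.map x).sort (· ≤ ·)).getD (k - 1) 0
  else 1

/-- The `k`-th order statistic of the subfamily `(x i)_{i ∈ S}`. -/
noncomputable def oStatS {n : ℕ} (S : Finset (Fin n)) (x : Fin n → ℝ) (k : ℕ) : ℝ :=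
  ((S.val.map x).sort (· ≤ ·)).getD (k - 1) 0

/-- The influence index `I(f,k)` of the `k`-th largest variable on `f`. -/
noncomputable def infl {n : ℕ} (f : (Fin n → ℝ) → ℝ) (k : ℕ) : ℝ :=
  -((n:ℝ)+1)*((n:ℝ)+2) * ∫ x in Set.Icc (0:Fin n → ℝ) 1,
    f x * (oStat x (k+1) - 2*oStat x k + oStat x (k-1))

/-- `shiftK k x y` replaces the coordinate of `x` achieving the `k`-th order
statistic by `y` (on points with pairwise distinct coordinates there is exactly
one such coordinate: the unique `i` such that exactly `k` coordinates are `≤ x i`). -/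
noncomputable def shiftK {n : ℕ} (k : ℕ) (x : Fin n → ℝ) (y : ℝ) : Fin n → ℝ :=
  fun i => if (Finset.univ.filter fun j => x j ≤ x i).card = k then y else x i

namespace S18
variable {n : ℕ}


variable {n : ℕ}

noncomputable def cnt (x : Fin n → ℝ) (i : Fin n) : ℕ := (Finset.univ.filter fun j => x j ≤ x i).card

lemma sortedList_eq (x : Fin n → ℝ) :
    (Finset.univ.val.map x).sort (· ≤ ·) = List.ofFn (x ∘ Tuple.sort x) := by
  have hperm : ((Finset.univ.val.map x).sort (· ≤ ·)).Perm (List.ofFn (x ∘ Tuple.sort x)) := by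
    rw [← Multiset.coe_eq_coe, Multiset.sort_eq]
    have h2 : Finset.univ.val.map ⇑(Tuple.sort x) = Finset.univ.val := by
      conv_rhs => rw [← Finset.map_univ_equiv (Tuple.sort x)]
      simp [Finset.map_val]
    calc Finset.univ.val.map x = (Finset.univ.val.map ⇑(Tuple.sort x)).map x := by rw [h2]
    _ = Finset.univ.val.map (x ∘ Tuple.sort x) := by rw [Multiset.map_map]
    _ = ↑(List.ofFn (x ∘ Tuple.sort x)) := by
        rw [List.ofFn_eq_map, Fin.univ_def]
        rfl
  exact hperm.eq_of_pairwise' (Multiset.pairwise_sort _ _)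
    ((List.sortedLE_ofFn_iff.mpr (Tuple.monotone_sort x)).pairwise)

lemma oStat_eq_sort (x : Fin n → ℝ) {m : ℕ} (h1 : 1 ≤ m) (h2 : m ≤ n) :
    oStat x m = x (Tuple.sort x ⟨m - 1, by omega⟩) := by
  have hm : m ≠ 0 := by omega
  rw [oStat, if_neg hm, if_pos h2, sortedList_eq]
  rw [List.getD_eq_getElem _ _ (by simp; omega)]
  simp

lemma oStat_zero (x : Fin n → ℝ) : oStat x 0 = 0 := by simp [oStat]

lemma oStat_gt (x : Fin n → ℝ) {m : ℕ} (h : n < m) : oStat x m = 1 := by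
  have : m ≠ 0 := by omega
  rw [oStat, if_neg this, if_neg (by omega)]

lemma oStat_le_iff (x : Fin n → ℝ) {m : ℕ} (h1 : 1 ≤ m) (h2 : m ≤ n) (c : ℝ) :
    oStat x m ≤ c ↔ m ≤ (Finset.univ.filter fun j => x j ≤ c).card := by
  have hcard : Fintype.card {i // (x ∘ Tuple.sort x) i ≤ c} =
      (Finset.univ.filter fun j => x j ≤ c).card := by
    rw [Fintype.card_subtype]
    apply Finset.card_bij (fun i _ => Tuple.sort x i)
    · intro a ha; simp only [Finset.mem_filter, Finset.mem_univ, true_and,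
        Function.comp_apply] at ha ⊢; exact ha
    · intro a _ b _ h; exact (Tuple.sort x).injective h
    · intro b hb
      simp only [Finset.mem_filter, Finset.mem_univ, true_and] at hb
      exact ⟨(Tuple.sort x).symm b, by simpa using hb, by simp⟩
  have h := Tuple.lt_card_le_iff_apply_le_of_monotone (f := x ∘ Tuple.sort x) (a := c)
    (j := ⟨m - 1, by omega⟩) (Tuple.monotone_sort x)
  rw [oStat_eq_sort x h1 h2]
  rw [Function.comp_apply] at h
  rw [← h, ← hcard, Fintype.card_subtype]
  simp only [Fin.mk_lt_mk]  -- maybe coercion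
  constructor
  · intro hle; omega
  · intro hle; omega

lemma strictMono_sort {x : Fin n → ℝ} (hx : Function.Injective x) :
    StrictMono (x ∘ Tuple.sort x) :=
  (Tuple.monotone_sort x).strictMono_of_injective (hx.comp (Tuple.sort x).injective)

lemma cnt_sort {x : Fin n → ℝ} (hx : Function.Injective x) (m : Fin n) :
    cnt x (Tuple.sort x m) = m + 1 := by
  unfold cnt
  have h : (Finset.univ.filter fun j => x j ≤ x (Tuple.sort x m)) =
      Finset.map (Tuple.sort x).toEmbedding (Finset.univ.filter fun i => i ≤ m) := by
    ext j
    simp only [Finset.mem_filter, Finset.mem_univ, true_and, Finset.mem_map,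
      Equiv.coe_toEmbedding]
    constructor
    · intro hj
      refine ⟨(Tuple.sort x).symm j, ?_, by simp⟩
      have h2 : (x ∘ Tuple.sort x) ((Tuple.sort x).symm j) ≤ (x ∘ Tuple.sort x) m := by
        simpa using hj
      exact (strictMono_sort hx).le_iff_le.mp h2
    · rintro ⟨i, hi, rfl⟩
      exact (strictMono_sort hx).monotone hi
  rw [h, Finset.card_map]
  have : (Finset.univ.filter fun i => i ≤ m) = Finset.Iic m := by ext j; simp
  rw [this, Fin.card_Iic]

lemma cnt_eq_iff {x : Fin n → ℝ} (hx : Function.Injective x) {i : Fin n} {k : ℕ}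
    (h1 : 1 ≤ k) (h2 : k ≤ n) : cnt x i = k ↔ i = Tuple.sort x ⟨k - 1, by omega⟩ := by
  have h3 := cnt_sort hx ((Tuple.sort x).symm i)
  rw [Equiv.apply_symm_apply] at h3
  constructor
  · intro h
    rw [h] at h3
    have h4 : (Tuple.sort x).symm i = ⟨k - 1, by omega⟩ := Fin.ext (by simp; omega)
    rw [← h4, Equiv.apply_symm_apply]
  · rintro rfl
    rw [cnt_sort hx]
    simp
    omega

def Good (x : Fin n → ℝ) : Prop := Function.Injective x ∧ ∀ i, x i ∈ Set.Ioo (0:ℝ) 1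

lemma cnt_exists {x : Fin n → ℝ} {k : ℕ} (hx : Function.Injective x) (h1 : 1 ≤ k) (h2 : k ≤ n) :
    cnt x (Tuple.sort x ⟨k - 1, by omega⟩) = k := (cnt_eq_iff hx h1 h2).mpr rfl

lemma cnt_unique {x : Fin n → ℝ} {k : ℕ} (hx : Function.Injective x) {i j : Fin n}
    (h1 : 1 ≤ k) (h2 : k ≤ n) (hi : cnt x i = k) (hj : cnt x j = k) : i = j := by
  rw [(cnt_eq_iff hx h1 h2).mp hi, (cnt_eq_iff hx h1 h2).mp hj]

lemma shiftK_eq {x : Fin n → ℝ} {k : ℕ} (hx : Function.Injective x) {i : Fin n}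
    (h1 : 1 ≤ k) (h2 : k ≤ n) (hi : cnt x i = k) (y : ℝ) :
    shiftK k x y = Function.update x i y := by
  funext j
  show (if cnt x j = k then y else x j) = _
  by_cases hj : j = i
  · subst hj
    rw [if_pos hi, Function.update_self]
  · rw [if_neg, Function.update_of_ne hj]
    intro hc
    exact hj (cnt_unique hx h1 h2 hc hi)

lemma main_bounds {x : Fin n → ℝ} {k : ℕ} (hx : Good x) {i : Fin n} (h1 : 1 ≤ k) (h2 : k ≤ n)
    (hi : cnt x i = k) :
    oStat x k = x i ∧
    0 ≤ oStat x (k-1) ∧ oStat x (k-1) < x i ∧ x i < oStat x (k+1) ∧ oStat x (k+1) ≤ 1 ∧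
    (∀ j, x j < x i → x j ≤ oStat x (k-1)) ∧ (∀ j, x i < x j → oStat x (k+1) ≤ x j) ∧
    (2 ≤ k → ∃ j, j ≠ i ∧ x j = oStat x (k-1)) ∧
    (k < n → ∃ j, j ≠ i ∧ x j = oStat x (k+1)) := by
  obtain ⟨hinj, hio⟩ := hx
  have hie := (cnt_eq_iff hinj h1 h2).mp hi
  have sm := strictMono_sort hinj
  have hvi : ((Tuple.sort x).symm i : ℕ) = k - 1 := by rw [hie]; simp
  have hxi : x i = (x ∘ Tuple.sort x) ((Tuple.sort x).symm i) := by simp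
  have ha : oStat x k = x i := by
    rw [oStat_eq_sort x h1 h2, hie]
  have hlt : ∀ j : Fin n, x j < x i ↔ ((Tuple.sort x).symm j : ℕ) < k - 1 := by
    intro j
    have hj : x j = (x ∘ Tuple.sort x) ((Tuple.sort x).symm j) := by simp
    rw [hj, hxi, sm.lt_iff_lt, Fin.lt_def, hvi]
  have hgt : ∀ j : Fin n, x i < x j ↔ k - 1 < ((Tuple.sort x).symm j : ℕ) := by
    intro j
    have hj : x j = (x ∘ Tuple.sort x) ((Tuple.sort x).symm j) := by simp
    rw [hj, hxi, sm.lt_iff_lt, Fin.lt_def, hvi]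
  have key : ∀ m : Fin n, x (Tuple.sort x m) ≤ x i ↔ (m : ℕ) ≤ k - 1 := by
    intro m
    rw [hxi, show x (Tuple.sort x m) = (x ∘ Tuple.sort x) m from rfl, sm.le_iff_le,
      Fin.le_def, hvi]
  have hlow : 0 ≤ oStat x (k-1) ∧ oStat x (k-1) < x i ∧
      (∀ j, x j < x i → x j ≤ oStat x (k-1)) ∧
      (2 ≤ k → ∃ j, j ≠ i ∧ x j = oStat x (k-1)) := by
    by_cases hk2 : 2 ≤ k
    · have he : oStat x (k-1) = x (Tuple.sort x ⟨k-1-1, by omega⟩) :=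
        oStat_eq_sort x (by omega) (by omega)
      have hlt1 : oStat x (k-1) < x i := by
        rw [he]
        have := (hlt (Tuple.sort x ⟨k-1-1, by omega⟩)).mpr (by simp; omega)
        exact this
      refine ⟨he ▸ (hio _).1.le, hlt1, ?_, fun _ => ⟨Tuple.sort x ⟨k-1-1, by omega⟩, ?_, he.symm⟩⟩
      · intro j hj
        rw [he]
        have hv := (hlt j).mp hj
        have hj2 : x j = (x ∘ Tuple.sort x) ((Tuple.sort x).symm j) := by simp
        rw [hj2]
        have hle : (Tuple.sort x).symm j ≤ (⟨k-1-1, by omega⟩ : Fin n) := by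
          rw [Fin.le_def]
          simp
          omega
        exact sm.monotone hle
      · intro hc
        have h6 := congrArg (fun z => ((Tuple.sort x).symm z : ℕ)) hc
        simp only [Equiv.symm_apply_apply] at h6
        rw [hvi] at h6
        omega
    · have hk1 : k = 1 := by omega
      subst hk1
      rw [show (1:ℕ) - 1 = 0 from rfl, oStat_zero]
      exact ⟨le_rfl, (hio i).1, fun j hj => absurd ((hlt j).mp hj) (by omega), by omega⟩
  have hupp : x i < oStat x (k+1) ∧ oStat x (k+1) ≤ 1 ∧
      (∀ j, x i < x j → oStat x (k+1) ≤ x j) ∧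
      (k < n → ∃ j, j ≠ i ∧ x j = oStat x (k+1)) := by
    by_cases hkn : k < n
    · have he : oStat x (k+1) = x (Tuple.sort x ⟨k+1-1, by omega⟩) :=
        oStat_eq_sort x (by omega) (by omega)
      have hgt1 : x i < oStat x (k+1) := by
        rw [he]
        exact (hgt (Tuple.sort x ⟨k+1-1, by omega⟩)).mpr (by simp; omega)
      refine ⟨hgt1, he ▸ (hio _).2.le, ?_, fun _ => ⟨Tuple.sort x ⟨k+1-1, by omega⟩, ?_, he.symm⟩⟩
      · intro j hj
        rw [he]
        have hv := (hgt j).mp hj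
        have hj2 : x j = (x ∘ Tuple.sort x) ((Tuple.sort x).symm j) := by simp
        rw [hj2]
        have hle : (⟨k+1-1, by omega⟩ : Fin n) ≤ (Tuple.sort x).symm j := by
          rw [Fin.le_def]
          simp
          omega
        exact sm.monotone hle
      · intro hc
        have h6 := congrArg (fun z => ((Tuple.sort x).symm z : ℕ)) hc
        simp only [Equiv.symm_apply_apply] at h6
        rw [hvi] at h6
        omega
    · have hkn2 : k = n := by omega
      subst hkn2
      rw [oStat_gt x (by omega)]
      refine ⟨(hio i).2, le_rfl, fun j hj => ?_, by omega⟩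
      have hv := (hgt j).mp hj
      have := ((Tuple.sort x).symm j).isLt
      omega
  exact ⟨ha, hlow.1, hlow.2.1, hupp.1, hupp.2.1, hlow.2.2.1, hupp.2.2.1, hlow.2.2.2, hupp.2.2.2⟩

lemma update_lemma {x : Fin n → ℝ} {k : ℕ} (hx : Good x) {i : Fin n} (h1 : 1 ≤ k) (h2 : k ≤ n)
    (hi : cnt x i = k) {y : ℝ} (hy1 : oStat x (k-1) < y) (hy2 : y < oStat x (k+1)) :
    Good (Function.update x i y) ∧ cnt (Function.update x i y) i = k ∧
    oStat (Function.update x i y) (k-1) = oStat x (k-1) ∧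
    oStat (Function.update x i y) (k+1) = oStat x (k+1) := by
  obtain ⟨ha, hb0, hb1, hb2, hb3, hfl, hfu, hel, heu⟩ := main_bounds hx h1 h2 hi
  obtain ⟨hinj, hio⟩ := hx
  set x' := Function.update x i y with hxdef
  have hx'i : x' i = y := Function.update_self i y x
  have hx'j : ∀ j, j ≠ i → x' j = x j := fun j hj => Function.update_of_ne hj y x
  have hA : ∀ j, j ≠ i → x j < x i → x j < y := fun j hj h => lt_of_le_of_lt (hfl j h) hy1
  have hB : ∀ j, j ≠ i → x i < x j → y < x j := fun j hj h => lt_of_lt_of_le hy2 (hfu j h)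
  have hxne : ∀ j, j ≠ i → x j ≠ x i := fun j hj => fun he => hj (hinj he)
  have hC : ∀ j, j ≠ i → (x j < y ↔ x j < x i) := by
    intro j hj
    constructor
    · intro h
      rcases lt_or_gt_of_ne (hxne j hj) with h'|h'
      · exact h'
      · exact absurd (hB j hj h') (by linarith)
    · exact hA j hj
  have hyne : ∀ j, j ≠ i → x j ≠ y := by
    intro j hj
    rcases lt_or_gt_of_ne (hxne j hj) with h'|h'
    · exact ne_of_lt (hA j hj h')
    · exact ne_of_gt (hB j hj h')
  have hGood : Good x' := by
    constructor
    · intro a b hab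
      by_cases haa : a = i <;> by_cases hbb : b = i
      · rw [haa, hbb]
      · rw [haa] at hab ⊢
        rw [hx'i, hx'j b hbb] at hab
        exact absurd hab.symm (hyne b hbb)
      · rw [hbb] at hab ⊢
        rw [hx'i, hx'j a haa] at hab
        exact absurd hab (hyne a haa)
      · rw [hx'j a haa, hx'j b hbb] at hab
        exact hinj hab
    · intro j
      by_cases hj : j = i
      · rw [hj, hx'i]
        exact ⟨lt_of_le_of_lt hb0 hy1, lt_of_lt_of_le hy2 hb3⟩
      · rw [hx'j j hj]; exact hio j
  have hcnt : cnt x' i = k := by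
    have hset : (Finset.univ.filter fun j => x' j ≤ x' i) =
        (Finset.univ.filter fun j => x j ≤ x i) := by
      ext j
      simp only [Finset.mem_filter, Finset.mem_univ, true_and]
      by_cases hj : j = i
      · subst hj; simp
      · rw [hx'j j hj, hx'i]
        constructor
        · intro h
          exact le_of_lt ((hC j hj).mp (lt_of_le_of_ne h (hyne j hj)))
        · intro h
          exact le_of_lt ((hC j hj).mpr (lt_of_le_of_ne h (hxne j hj)))
    show (Finset.univ.filter fun j => x' j ≤ x' i).card = k
    rw [hset]; exact hi
  refine ⟨hGood, hcnt, ?_, ?_⟩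
  · obtain ⟨ha', hb0', hb1', hb2', hb3', hfl', hfu', hel', heu'⟩ :=
      main_bounds hGood h1 h2 hcnt
    by_cases hk2 : 2 ≤ k
    · obtain ⟨j0, hj0i, hj0⟩ := hel hk2
      obtain ⟨j1, hj1i, hj1⟩ := hel' hk2
      have e1 : oStat x (k-1) ≤ oStat x' (k-1) := by
        rw [← hj0]
        have hq : x' j0 = x j0 := hx'j j0 hj0i
        rw [← hq]
        apply hfl' j0
        rw [hq, hx'i, hj0]
        exact hy1
      have e2 : oStat x' (k-1) ≤ oStat x (k-1) := by
        rw [← hj1, hx'j j1 hj1i]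
        apply hfl j1
        have h7 : x' j1 < x' i := by rw [hj1]; exact hb1'
        rw [hx'j j1 hj1i, hx'i] at h7
        exact (hC j1 hj1i).mp h7
      linarith
    · have hk1 : k = 1 := by omega
      subst hk1
      rw [show (1:ℕ) - 1 = 0 from rfl, oStat_zero, oStat_zero]
  · obtain ⟨ha', hb0', hb1', hb2', hb3', hfl', hfu', hel', heu'⟩ :=
      main_bounds hGood h1 h2 hcnt
    by_cases hkn : k < n
    · obtain ⟨j0, hj0i, hj0⟩ := heu hkn
      obtain ⟨j1, hj1i, hj1⟩ := heu' hkn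
      have e1 : oStat x' (k+1) ≤ oStat x (k+1) := by
        rw [← hj0, ← hx'j j0 hj0i]
        apply hfu' j0
        rw [hx'j j0 hj0i, hx'i, hj0]
        exact hy2
      have e2 : oStat x (k+1) ≤ oStat x' (k+1) := by
        rw [← hj1, hx'j j1 hj1i]
        apply hfu j1
        have h7 : x' i < x' j1 := by rw [hj1]; exact hb2'
        rw [hx'j j1 hj1i, hx'i] at h7
        by_contra hcon
        push_neg at hcon
        have := (hC j1 hj1i).mpr (lt_of_le_of_ne hcon (hxne j1 hj1i))
        linarith
      linarith
    · have hkn2 : k = n := by omega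
      subst hkn2
      rw [oStat_gt x (by omega), oStat_gt x' (by omega)]

lemma measurable_card_le (c : ℝ) :
    Measurable fun x : Fin n → ℝ => (Finset.univ.filter fun j => x j ≤ c).card := by
  have h : ∀ x : Fin n → ℝ, (Finset.univ.filter fun j => x j ≤ c).card
      = ∑ j : Fin n, if x j ≤ c then 1 else 0 := fun x => Finset.card_filter _ _
  simp_rw [h]
  apply Finset.measurable_sum
  intro j _
  exact Measurable.ite (measurableSet_le (measurable_pi_apply j) measurable_const)
    measurable_const measurable_const

lemma measurable_cnt (i : Fin n) : Measurable fun x : Fin n → ℝ => cnt x i := by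
  have h : ∀ x : Fin n → ℝ, cnt x i = ∑ j : Fin n, if x j ≤ x i then 1 else 0 :=
    fun x => Finset.card_filter _ _
  simp_rw [h]
  apply Finset.measurable_sum
  intro j _
  exact Measurable.ite (measurableSet_le (measurable_pi_apply j) (measurable_pi_apply i))
    measurable_const measurable_const

lemma measurable_oStat (m : ℕ) : Measurable fun x : Fin n → ℝ => oStat x m := by
  rcases Nat.eq_zero_or_pos m with hm|hm
  · subst hm
    simp only [oStat_zero]
    exact measurable_const
  by_cases hmn : m ≤ n
  · apply measurable_of_Iic
    intro c
    have h : (fun x : Fin n → ℝ => oStat x m) ⁻¹' Set.Iic c =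
        (fun x : Fin n → ℝ => (Finset.univ.filter fun j => x j ≤ c).card) ⁻¹' Set.Ici m := by
      ext x
      simp only [Set.mem_preimage, Set.mem_Iic, Set.mem_Ici]
      exact oStat_le_iff x hm hmn c
    rw [h]
    exact measurable_card_le c (measurableSet_Ici)
  · have h : (fun x : Fin n → ℝ => oStat x m) = fun _ => (1:ℝ) :=
      funext fun x => oStat_gt x (by omega)
    rw [h]
    exact measurable_const

/-- the coordinate swap map -/
def swapFn (i : Fin n) : (Fin n → ℝ) × ℝ → (Fin n → ℝ) × ℝ :=
  fun p => (Function.update p.1 i p.2, p.1 i)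

lemma swapFn_invol (i : Fin n) : Function.Involutive (swapFn i) := by
  intro p
  unfold swapFn
  simp [Function.update_idem, Function.update_eq_self]

lemma measurable_swapFn (i : Fin n) : Measurable (swapFn i) := by
  apply Measurable.prodMk
  · apply measurable_pi_lambda
    intro j
    by_cases hj : j = i
    · subst hj
      simp only [Function.update_self]
      exact measurable_snd
    · simp only [Function.update_of_ne hj]
      exact (measurable_pi_apply j).comp measurable_fst
  · exact (measurable_pi_apply i).comp measurable_fst

noncomputable def swapE (i : Fin n) : ((Fin n → ℝ) × ℝ) ≃ᵐ ((Fin n → ℝ) × ℝ) where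
  toEquiv := Function.Involutive.toPerm _ (swapFn_invol i)
  measurable_toFun := measurable_swapFn i
  measurable_invFun := measurable_swapFn i

lemma swapE_coe (i : Fin n) : ⇑(swapE i) = swapFn i := rfl

lemma measurePreserving_swapFn (i : Fin n) :
    MeasurePreserving (swapFn i) (volume : Measure ((Fin n → ℝ) × ℝ)) volume := by
  cases n with
  | zero => exact absurd i.isLt (by omega)
  | succ m =>
    set F := (Fin m → ℝ)
    set e1 := MeasurableEquiv.piFinSuccAbove (fun _ : Fin (m+1) => ℝ) i with he1
    have hmp1 := volume_preserving_piFinSuccAbove (fun _ : Fin (m+1) => ℝ) i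
    have mpP1 : MeasurePreserving (Prod.map (⇑e1) (id : ℝ → ℝ))
        (volume : Measure ((Fin (m+1) → ℝ) × ℝ)) (volume : Measure ((ℝ × F) × ℝ)) :=
      hmp1.prod (MeasurePreserving.id volume)
    have mpP6 : MeasurePreserving (Prod.map (⇑e1.symm) (id : ℝ → ℝ))
        (volume : Measure ((ℝ × F) × ℝ)) (volume : Measure ((Fin (m+1) → ℝ) × ℝ)) :=
      (hmp1.symm e1).prod (MeasurePreserving.id volume)
    have s1 : MeasurePreserving
        (⇑(MeasurableEquiv.prodAssoc : (ℝ × F) × ℝ ≃ᵐ ℝ × (F × ℝ)))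
        volume volume := volume_preserving_prodAssoc
    have s2 : MeasurePreserving (Prod.map (id : ℝ → ℝ) (Prod.swap : F × ℝ → ℝ × F))
        (volume : Measure (ℝ × (F × ℝ))) (volume : Measure (ℝ × (ℝ × F))) :=
      (MeasurePreserving.id volume).prod (Measure.measurePreserving_swap)
    have s3 : MeasurePreserving
        (⇑(MeasurableEquiv.prodAssoc : (ℝ × ℝ) × F ≃ᵐ ℝ × (ℝ × F)).symm)
        volume volume := volume_preserving_prodAssoc.symm _
    have s4 : MeasurePreserving (Prod.map (Prod.swap : ℝ × ℝ → ℝ × ℝ) (id : F → F))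
        (volume : Measure ((ℝ × ℝ) × F)) (volume : Measure ((ℝ × ℝ) × F)) :=
      (Measure.measurePreserving_swap).prod (MeasurePreserving.id volume)
    have s5 : MeasurePreserving
        (⇑(MeasurableEquiv.prodAssoc : (ℝ × ℝ) × F ≃ᵐ ℝ × (ℝ × F)))
        volume volume := volume_preserving_prodAssoc
    have s6 : MeasurePreserving (Prod.map (id : ℝ → ℝ) (Prod.swap : ℝ × F → F × ℝ))
        (volume : Measure (ℝ × (ℝ × F))) (volume : Measure (ℝ × (F × ℝ))) :=
      (MeasurePreserving.id volume).prod (Measure.measurePreserving_swap)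
    have s7 : MeasurePreserving
        (⇑(MeasurableEquiv.prodAssoc : (ℝ × F) × ℝ ≃ᵐ ℝ × (F × ℝ)).symm)
        volume volume := volume_preserving_prodAssoc.symm _
    have hfun : swapFn i = (Prod.map (⇑e1.symm) (id : ℝ → ℝ)) ∘
        (⇑(MeasurableEquiv.prodAssoc : (ℝ × F) × ℝ ≃ᵐ ℝ × (F × ℝ)).symm) ∘
        (Prod.map (id : ℝ → ℝ) (Prod.swap : ℝ × F → F × ℝ)) ∘
        (⇑(MeasurableEquiv.prodAssoc : (ℝ × ℝ) × F ≃ᵐ ℝ × (ℝ × F))) ∘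
        (Prod.map (Prod.swap : ℝ × ℝ → ℝ × ℝ) (id : F → F)) ∘
        (⇑(MeasurableEquiv.prodAssoc : (ℝ × ℝ) × F ≃ᵐ ℝ × (ℝ × F)).symm) ∘
        (Prod.map (id : ℝ → ℝ) (Prod.swap : F × ℝ → ℝ × F)) ∘
        (⇑(MeasurableEquiv.prodAssoc : (ℝ × F) × ℝ ≃ᵐ ℝ × (F × ℝ))) ∘
        (Prod.map (⇑e1) (id : ℝ → ℝ)) := by
      funext p
      obtain ⟨x, y⟩ := p
      show swapFn i (x, y) = (e1.symm (y, (e1 x).2), (e1 x).1)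
      have h1 : e1 x = (x i, i.removeNth x) := rfl
      rw [h1]
      show (Function.update x i y, x i) = (e1.symm (y, i.removeNth x), x i)
      rw [show e1.symm (y, i.removeNth x) = i.insertNth y (i.removeNth x) from rfl]
      rw [Fin.insertNth_removeNth]
    rw [hfun]
    exact mpP6.comp (s7.comp (s6.comp (s5.comp (s4.comp (s3.comp (s2.comp (s1.comp mpP1)))))))

lemma null_eq_coord {i j : Fin n} (hij : i ≠ j) :
    (volume : Measure (Fin n → ℝ)) {x | x i = x j} = 0 := by
  cases n with
  | zero => exact absurd i.isLt (by omega)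
  | succ m =>
    obtain ⟨j', hj'⟩ := Fin.exists_succAbove_eq (Ne.symm hij)
    set e1 := MeasurableEquiv.piFinSuccAbove (fun _ : Fin (m+1) => ℝ) i with he1
    have hmp := volume_preserving_piFinSuccAbove (fun _ : Fin (m+1) => ℝ) i
    have hsm : MeasurableSet {q : ℝ × (Fin m → ℝ) | q.1 = q.2 j'} :=
      measurableSet_eq_fun measurable_fst ((measurable_pi_apply j').comp measurable_snd)
    have hs : {x : Fin (m+1) → ℝ | x i = x j} =
        ⇑e1 ⁻¹' {q : ℝ × (Fin m → ℝ) | q.1 = q.2 j'} := by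
      ext x
      show x i = x j ↔ (e1 x).1 = (e1 x).2 j'
      have h2 : e1 x = (x i, i.removeNth x) := rfl
      rw [h2]
      show x i = x j ↔ x i = x (i.succAbove j')
      rw [hj']
    rw [hs, hmp.measure_preimage hsm.nullMeasurableSet]
    rw [show (volume : Measure (ℝ × (Fin m → ℝ))) = (volume : Measure ℝ).prod volume from rfl]
    rw [Measure.prod_apply hsm]
    have hz : ∀ a : ℝ, (volume : Measure (Fin m → ℝ))
        (Prod.mk a ⁻¹' {q : ℝ × (Fin m → ℝ) | q.1 = q.2 j'}) = 0 := by
      intro a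
      have hset : (Prod.mk a ⁻¹' {q : ℝ × (Fin m → ℝ) | q.1 = q.2 j'}) =
          {z : Fin m → ℝ | z j' = a} := by
        ext z
        simp [eq_comm]
      rw [hset]
      rw [show (volume : Measure (Fin m → ℝ)) = Measure.pi (fun _ => volume) from rfl]
      exact Measure.pi_hyperplane (fun _ : Fin m => (volume : Measure ℝ)) j' a
    simp only [hz]
    exact lintegral_zero

lemma null_coord_const (i : Fin n) (c : ℝ) :
    (volume : Measure (Fin n → ℝ)) {x | x i = c} = 0 := by
  rw [show (volume : Measure (Fin n → ℝ)) = Measure.pi (fun _ => volume) from rfl]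
  exact Measure.pi_hyperplane (fun _ : Fin n => (volume : Measure ℝ)) i c

lemma null_snd_eq (g : (Fin n → ℝ) → ℝ) (hg : Measurable g) :
    (volume : Measure ((Fin n → ℝ) × ℝ)) {p | p.2 = g p.1} = 0 := by
  have hsm : MeasurableSet {p : (Fin n → ℝ) × ℝ | p.2 = g p.1} :=
    measurableSet_eq_fun measurable_snd (hg.comp measurable_fst)
  rw [show (volume : Measure ((Fin n → ℝ) × ℝ)) =
    (volume : Measure (Fin n → ℝ)).prod volume from rfl]
  rw [Measure.prod_apply hsm]
  have hz : ∀ x, (volume : Measure ℝ)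
      (Prod.mk x ⁻¹' {p : (Fin n → ℝ) × ℝ | p.2 = g p.1}) = 0 := by
    intro x
    have hset : Prod.mk x ⁻¹' {p : (Fin n → ℝ) × ℝ | p.2 = g p.1} = {g x} := by
      ext y
      simp
    rw [hset]
    exact measure_singleton _
  simp only [hz]
  exact lintegral_zero

lemma null_fst_prop {s : Set (Fin n → ℝ)} (hs : (volume : Measure (Fin n → ℝ)) s = 0) :
    (volume : Measure ((Fin n → ℝ) × ℝ)) (Prod.fst ⁻¹' s) = 0 := by
  rw [show (volume : Measure ((Fin n → ℝ) × ℝ)) =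
    (volume : Measure (Fin n → ℝ)).prod volume from rfl]
  have : Prod.fst ⁻¹' s = s ×ˢ (Set.univ : Set ℝ) := by
    ext p
    simp
  rw [this, Measure.prod_prod, hs, zero_mul]

lemma ae_good : ∀ᵐ x ∂(volume.restrict (Set.Icc (0:Fin n → ℝ) 1)), Good x := by
  have h1 : ∀ᵐ x : Fin n → ℝ ∂volume, ∀ i j : Fin n, i ≠ j → x i ≠ x j := by
    rw [ae_all_iff]
    intro i
    rw [ae_all_iff]
    intro j
    by_cases hij : i = j
    · exact Filter.Eventually.of_forall fun x h => absurd hij h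
    · rw [ae_iff]
      refine measure_mono_null ?_ (null_eq_coord hij)
      intro x hx
      simp only [Set.mem_setOf_eq, Classical.not_imp, not_not] at hx
      exact hx.2
  have h2 : ∀ᵐ x : Fin n → ℝ ∂volume, ∀ i : Fin n, x i ≠ 0 ∧ x i ≠ 1 := by
    rw [ae_all_iff]
    intro i
    have e0 : ∀ᵐ x : Fin n → ℝ ∂volume, x i ≠ 0 := by
      rw [ae_iff]
      refine measure_mono_null ?_ (null_coord_const i 0)
      intro x hx
      simpa using hx
    have e1 : ∀ᵐ x : Fin n → ℝ ∂volume, x i ≠ 1 := by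
      rw [ae_iff]
      refine measure_mono_null ?_ (null_coord_const i 1)
      intro x hx
      simpa using hx
    exact e0.and e1
  have h3 := ae_restrict_of_ae (μ := (volume : Measure (Fin n → ℝ)))
    (s := Set.Icc (0:Fin n → ℝ) 1) (h1.and h2)
  have h4 := ae_restrict_mem (μ := (volume : Measure (Fin n → ℝ))) (measurableSet_Icc : MeasurableSet (Set.Icc (0:Fin n → ℝ) 1))
  filter_upwards [h3, h4] with x hx hxQ
  obtain ⟨hd, hio⟩ := hx
  constructor
  · intro a b hab
    by_contra hne
    exact hd a b hne hab
  · intro i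
    obtain ⟨h0, h1'⟩ := hio i
    exact ⟨lt_of_le_of_ne (Pi.le_def.mp hxQ.1 i) (Ne.symm h0),
      lt_of_le_of_ne (Pi.le_def.mp hxQ.2 i) h1'⟩

lemma good_mem {x : Fin n → ℝ} (hx : Good x) : x ∈ Set.Icc (0:Fin n → ℝ) 1 :=
  ⟨fun i => ((hx.2 i).1).le, fun i => ((hx.2 i).2).le⟩

lemma good_update {x : Fin n → ℝ} (hx : Good x) (i : Fin n) {y : ℝ}
    (hy : y ∈ Set.Ioo (0:ℝ) 1) (hne : ∀ j, y ≠ x j) : Good (Function.update x i y) := by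
  obtain ⟨hinj, hio⟩ := hx
  constructor
  · intro a b hab
    by_cases haa : a = i <;> by_cases hbb : b = i
    · rw [haa, hbb]
    · rw [haa] at hab ⊢
      rw [Function.update_self, Function.update_of_ne hbb] at hab
      exact absurd hab (hne b)
    · rw [hbb] at hab ⊢
      rw [Function.update_self, Function.update_of_ne haa] at hab
      exact absurd hab.symm (hne a)
    · rw [Function.update_of_ne haa, Function.update_of_ne hbb] at hab
      exact hinj hab
  · intro j
    by_cases hj : j = i
    · rw [hj, Function.update_self]
      exact hy
    · rw [Function.update_of_ne hj]
      exact hio j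

def AS (k : ℕ) (i : Fin n) : Set ((Fin n → ℝ) × ℝ) :=
  {p | p.1 ∈ Set.Icc (0:Fin n → ℝ) 1 ∧ cnt p.1 i = k ∧ p.1 i < p.2 ∧ p.2 < oStat p.1 (k+1)}
def BS (k : ℕ) (i : Fin n) : Set ((Fin n → ℝ) × ℝ) :=
  {p | p.1 ∈ Set.Icc (0:Fin n → ℝ) 1 ∧ cnt p.1 i = k ∧ oStat p.1 (k-1) < p.2 ∧ p.2 < p.1 i}
def BP (k : ℕ) : Set ((Fin n → ℝ) × ℝ) :=
  {p : (Fin n → ℝ) × ℝ |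
    p.1 ∈ Set.Icc (0:Fin n → ℝ) 1 ∧ oStat p.1 (k-1) < p.2 ∧ p.2 < oStat p.1 k}

lemma meas_AS (k : ℕ) (i : Fin n) : MeasurableSet (AS k i) := by
  apply MeasurableSet.inter (measurableSet_Icc.preimage measurable_fst)
  apply MeasurableSet.inter (((measurable_cnt i).comp measurable_fst) (measurableSet_singleton k))
  exact MeasurableSet.inter
    (measurableSet_lt ((measurable_pi_apply i).comp measurable_fst) measurable_snd)
    (measurableSet_lt measurable_snd ((measurable_oStat (k+1)).comp measurable_fst))

lemma meas_BS (k : ℕ) (i : Fin n) : MeasurableSet (BS k i) := by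
  apply MeasurableSet.inter (measurableSet_Icc.preimage measurable_fst)
  apply MeasurableSet.inter (((measurable_cnt i).comp measurable_fst) (measurableSet_singleton k))
  exact MeasurableSet.inter
    (measurableSet_lt ((measurable_oStat (k-1)).comp measurable_fst) measurable_snd)
    (measurableSet_lt measurable_snd ((measurable_pi_apply i).comp measurable_fst))

lemma meas_BP (k : ℕ) : MeasurableSet (BP (n := n) k) := by
  apply MeasurableSet.inter (measurableSet_Icc.preimage measurable_fst)
  exact MeasurableSet.inter
    (measurableSet_lt ((measurable_oStat (k-1)).comp measurable_fst) measurable_snd)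
    (measurableSet_lt measurable_snd ((measurable_oStat k).comp measurable_fst))

lemma comb {k : ℕ} (hk : 1 ≤ k) (hkn : k ≤ n) {p : (Fin n → ℝ) × ℝ}
    (hp1 : Good p.1) (hp2 : ∀ j, p.2 ≠ p.1 j) (hp3 : p.2 ∈ Set.Ioo (0:ℝ) 1) (i : Fin n) :
    p ∈ AS k i ↔ swapFn i p ∈ BS k i := by
  constructor
  · rintro ⟨hpQ, hcnt, hlt, hlt2⟩
    obtain ⟨hc1, hc2, hc3, hc4, hc5, hc6, hc7, hc8, hc9⟩ := main_bounds hp1 hk hkn hcnt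
    obtain ⟨hG', hcnt', hOm', hOp'⟩ :=
      update_lemma hp1 hk hkn hcnt (lt_trans hc3 hlt) hlt2
    refine ⟨good_mem hG', hcnt', ?_, ?_⟩
    · show oStat (Function.update p.1 i p.2) (k-1) < p.1 i
      rw [hOm']
      exact hc3
    · show p.1 i < Function.update p.1 i p.2 i
      rw [Function.update_self]
      exact hlt
  · rintro ⟨hpQ', hcnt', h1', h2'⟩
    have hg' : Good (Function.update p.1 i p.2) := good_update hp1 i hp3 hp2
    have hcnt'' : cnt (Function.update p.1 i p.2) i = k := hcnt'
    have h1'' : oStat (Function.update p.1 i p.2) (k-1) < p.1 i := h1'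
    have h2'' : p.1 i < Function.update p.1 i p.2 i := h2'
    rw [Function.update_self] at h2''
    obtain ⟨hd1, hd2, hd3, hd4, hd5, hd6, hd7, hd8, hd9⟩ := main_bounds hg' hk hkn hcnt''
    rw [Function.update_self] at hd4
    obtain ⟨hG2, hcnt2, hOm2, hOp2⟩ :=
      update_lemma hg' hk hkn hcnt'' h1'' (lt_trans h2'' hd4)
    have hxx : Function.update (Function.update p.1 i p.2) i (p.1 i) = p.1 := by
      rw [Function.update_idem, Function.update_eq_self]
    rw [hxx] at hcnt2 hOp2
    refine ⟨good_mem hp1, hcnt2, h2'', ?_⟩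
    rw [hOp2]
    exact hd4

lemma mem_Icc_pi {x : Fin n → ℝ} :
    x ∈ Set.Icc (0:Fin n → ℝ) 1 ↔ ∀ j, x j ∈ Set.Icc (0:ℝ) 1 := by
  constructor
  · intro h j
    exact ⟨Pi.le_def.mp h.1 j, Pi.le_def.mp h.2 j⟩
  · intro h
    exact ⟨Pi.le_def.mpr fun j => (h j).1, Pi.le_def.mpr fun j => (h j).2⟩

end S18

open S18 in
theorem stmt18 (n k : ℕ) (hk : 1 ≤ k) (hkn : k ≤ n) (f : (Fin n → ℝ) → ℝ)
    (hf : MemLp f 2 (volume.restrict (Set.Icc (0 : Fin n → ℝ) 1))) :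
    infl f k = ((n : ℝ) + 1) * ((n : ℝ) + 2) *
      ∫ x in Set.Icc (0 : Fin n → ℝ) 1,
        ∫ y in (oStat x k)..(oStat x (k + 1)), (f (shiftK k x y) - f x) := by
  classical
  set Q : Set (Fin n → ℝ) := Set.Icc 0 1 with hQdef
  set I01 : Set ℝ := Set.Icc 0 1 with hIdef
  set μ : Measure (Fin n → ℝ) := volume.restrict Q with hμdef
  set ν : Measure ℝ := volume.restrict I01 with hνdef
  haveI hProbν : IsProbabilityMeasure ν :=
    ⟨by rw [hνdef, Measure.restrict_apply_univ, hIdef, Real.volume_Icc]; norm_num⟩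
  haveI hFinμ : IsFiniteMeasure μ :=
    ⟨by rw [hμdef, Measure.restrict_apply_univ]; exact isCompact_Icc.measure_lt_top⟩
  have hfi : Integrable f μ := hf.integrable (by norm_num)
  set ρ : Measure ((Fin n → ℝ) × ℝ) := μ.prod ν with hρdef
  have hρ_eq : ρ = (volume : Measure ((Fin n → ℝ) × ℝ)).restrict (Q ×ˢ I01) := by
    rw [hρdef, hμdef, hνdef, Measure.prod_restrict]
    rfl
  have hfst : MeasurePreserving (Prod.fst : (Fin n → ℝ) × ℝ → (Fin n → ℝ)) ρ μ := by
    constructor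
    · exact measurable_fst
    · rw [hρdef, Measure.map_fst_prod]
      simp
  have hwint : Integrable (fun p : (Fin n → ℝ) × ℝ => f p.1) ρ :=
    (hfst.integrable_comp hf.aestronglyMeasurable).mpr hfi
  have hgood : ∀ᵐ x ∂μ, Good x := ae_good
  -- the a.e. set on the product
  have hDae : ∀ᵐ p : (Fin n → ℝ) × ℝ ∂ρ,
      Good p.1 ∧ (∀ j, p.2 ≠ p.1 j) ∧ p.2 ∈ Set.Ioo (0:ℝ) 1 := by
    have hA : ∀ᵐ p : (Fin n → ℝ) × ℝ ∂ρ, Good p.1 :=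
      hfst.quasiMeasurePreserving.ae hgood
    have hvol : ∀ᵐ p : (Fin n → ℝ) × ℝ ∂(volume : Measure ((Fin n → ℝ) × ℝ)),
        (∀ j, p.2 ≠ p.1 j) ∧ p.2 ≠ 0 ∧ p.2 ≠ 1 := by
      have h1 : ∀ᵐ p : (Fin n → ℝ) × ℝ ∂(volume : Measure ((Fin n → ℝ) × ℝ)),
          ∀ j, p.2 ≠ p.1 j := by
        rw [ae_all_iff]
        intro j
        rw [ae_iff]
        refine measure_mono_null ?_ (null_snd_eq (fun x => x j) (measurable_pi_apply j))
        intro p hp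
        simpa using hp
      have h2 : ∀ᵐ p : (Fin n → ℝ) × ℝ ∂(volume : Measure ((Fin n → ℝ) × ℝ)), p.2 ≠ 0 := by
        rw [ae_iff]
        refine measure_mono_null ?_ (null_snd_eq (fun _ => 0) measurable_const)
        intro p hp
        simpa using hp
      have h3 : ∀ᵐ p : (Fin n → ℝ) × ℝ ∂(volume : Measure ((Fin n → ℝ) × ℝ)), p.2 ≠ 1 := by
        rw [ae_iff]
        refine measure_mono_null ?_ (null_snd_eq (fun _ => 1) measurable_const)
        intro p hp
        simpa using hp
      exact h1.and (h2.and h3)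
    have hB : ∀ᵐ p : (Fin n → ℝ) × ℝ ∂ρ, (∀ j, p.2 ≠ p.1 j) ∧ p.2 ≠ 0 ∧ p.2 ≠ 1 := by
      rw [hρ_eq]
      exact ae_restrict_of_ae hvol
    have hmem : ∀ᵐ p : (Fin n → ℝ) × ℝ ∂ρ, p ∈ Q ×ˢ I01 := by
      rw [hρ_eq]
      exact ae_restrict_mem (measurableSet_Icc.prod measurableSet_Icc)
    filter_upwards [hA, hB, hmem] with p h1 h2 h3
    exact ⟨h1, h2.1, lt_of_le_of_ne h3.2.1 (Ne.symm h2.2.1), lt_of_le_of_ne h3.2.2 h2.2.2⟩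
  -- measure preservation of the swaps on ρ
  have hpre : ∀ i : Fin n, swapFn i ⁻¹' (Q ×ˢ I01) = Q ×ˢ I01 := by
    intro i
    ext p
    simp only [Set.mem_preimage, Set.mem_prod]
    show (Function.update p.1 i p.2 ∈ Q ∧ p.1 i ∈ I01) ↔ _
    constructor
    · rintro ⟨hu, hi⟩
      refine ⟨?_, ?_⟩
      · rw [hQdef, mem_Icc_pi]
        intro j
        by_cases hj : j = i
        · rw [hj]; exact hi
        · have := (mem_Icc_pi.mp hu) j
          rwa [Function.update_of_ne hj] at this
      · have := (mem_Icc_pi.mp hu) i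
        rwa [Function.update_self] at this
    · rintro ⟨hx, hy⟩
      refine ⟨?_, (mem_Icc_pi.mp hx) i⟩
      rw [hQdef, mem_Icc_pi]
      intro j
      by_cases hj : j = i
      · rw [hj, Function.update_self]; exact hy
      · rw [Function.update_of_ne hj]; exact (mem_Icc_pi.mp hx) j
  have hMP : ∀ i : Fin n, MeasurePreserving (swapFn i) ρ ρ := by
    intro i
    have h0 := (measurePreserving_swapFn i).restrict_preimage
      (s := Q ×ˢ I01) (measurableSet_Icc.prod measurableSet_Icc)
    rw [hpre i] at h0
    rw [hρ_eq]
    exact h0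
  -- function definitions
  set g : (Fin n → ℝ) × ℝ → ℝ := fun p => f (shiftK k p.1 p.2) with hgdef
  set F : (Fin n → ℝ) × ℝ → ℝ := (⋃ i, AS k i).indicator g with hFdef
  -- transported indicator identity
  have hAB : ∀ i : Fin n, (AS k i).indicator g
      =ᵐ[ρ] (fun p => (BS k i).indicator (fun q => f q.1) (swapFn i p)) := by
    intro i
    filter_upwards [hDae] with p hp
    by_cases hpA : p ∈ AS k i
    · rw [Set.indicator_of_mem hpA,
        Set.indicator_of_mem ((comb hk hkn hp.1 hp.2.1 hp.2.2 i).mp hpA)]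
      show f (shiftK k p.1 p.2) = f (swapFn i p).1
      rw [shiftK_eq hp.1.1 hk hkn hpA.2.1]
      rfl
    · rw [Set.indicator_of_notMem hpA, Set.indicator_of_notMem
        (fun hc => hpA ((comb hk hkn hp.1 hp.2.1 hp.2.2 i).mpr hc))]
  have hGint : ∀ i : Fin n, Integrable ((BS k i).indicator (fun q => f q.1)) ρ :=
    fun i => hwint.indicator (meas_BS k i)
  have hcompint : ∀ i : Fin n,
      Integrable (fun p => (BS k i).indicator (fun q => f q.1) (swapFn i p)) ρ :=
    fun i => ((hMP i).integrable_comp (hGint i).aestronglyMeasurable).mpr (hGint i)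
  have hAint : ∀ i : Fin n, Integrable ((AS k i).indicator g) ρ :=
    fun i => (hcompint i).congr (hAB i).symm
  have hIntEq : ∀ i : Fin n, ∫ p, (AS k i).indicator g p ∂ρ
      = ∫ p, (BS k i).indicator (fun q => f q.1) p ∂ρ := by
    intro i
    rw [integral_congr_ae (hAB i)]
    exact (hMP i).integral_comp (MeasurableEquiv.measurableEmbedding (swapE i)) _
  -- decomposition of F as a finite sum
  have hFsum : F =ᵐ[ρ] fun p => ∑ i : Fin n, (AS k i).indicator g p := by
    filter_upwards [hDae] with p hp
    by_cases hpU : p ∈ ⋃ i, AS k i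
    · obtain ⟨i, hpi⟩ := Set.mem_iUnion.mp hpU
      rw [hFdef, Set.indicator_of_mem hpU, Finset.sum_eq_single i]
      · rw [Set.indicator_of_mem hpi]
      · intro b _ hbne
        exact Set.indicator_of_notMem
          (fun hpb => hbne (cnt_unique hp.1.1 hk hkn hpb.2.1 hpi.2.1)) _
      · intro h
        exact absurd (Finset.mem_univ i) h
    · rw [hFdef, Set.indicator_of_notMem hpU]
      symm
      apply Finset.sum_eq_zero
      intro i _
      exact Set.indicator_of_notMem (fun hpi => hpU (Set.mem_iUnion.mpr ⟨i, hpi⟩)) _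
  have hFint : Integrable F ρ :=
    (integrable_finset_sum Finset.univ fun i _ => hAint i).congr hFsum.symm
  -- sum of BS indicators equals BP indicator a.e.
  have hBPsum : (fun p => ∑ i : Fin n, (BS k i).indicator (fun q => f q.1) p)
      =ᵐ[ρ] (BP k).indicator (fun q => f q.1) := by
    filter_upwards [hDae] with p hp
    have hcnt₀ := cnt_exists hp.1.1 hk hkn
    obtain b₀ := main_bounds hp.1 hk hkn hcnt₀
    by_cases hpB : p ∈ BP k
    · have hpBi : p ∈ BS k (Tuple.sort p.1 ⟨k-1, by omega⟩) :=
        ⟨hpB.1, hcnt₀, hpB.2.1, by rw [← b₀.1]; exact hpB.2.2⟩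
      rw [Set.indicator_of_mem hpB, Finset.sum_eq_single (Tuple.sort p.1 ⟨k-1, by omega⟩)]
      · rw [Set.indicator_of_mem hpBi]
      · intro b _ hbne
        exact Set.indicator_of_notMem
          (fun hc => hbne (cnt_unique hp.1.1 hk hkn hc.2.1 hcnt₀)) _
      · intro h
        exact absurd (Finset.mem_univ _) h
    · rw [Set.indicator_of_notMem hpB]
      apply Finset.sum_eq_zero
      intro i _
      apply Set.indicator_of_notMem
      intro hc
      obtain bi := main_bounds hp.1 hk hkn hc.2.1
      exact hpB ⟨hc.1, hc.2.2.1, by rw [bi.1]; exact hc.2.2.2⟩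
  have hFtoB : ∫ p, F p ∂ρ = ∫ p, (BP k).indicator (fun q => f q.1) p ∂ρ := by
    rw [integral_congr_ae hFsum,
      integral_finset_sum Finset.univ (fun i _ => hAint i),
      Finset.sum_congr rfl (fun i _ => hIntEq i),
      ← integral_finset_sum Finset.univ (fun i _ => hGint i)]
    exact integral_congr_ae hBPsum
  -- Fubini for the BP side
  have hBPint : Integrable ((BP k).indicator fun q => f q.1) ρ := hwint.indicator (meas_BP k)
  have hstep2 : ∫ p, (BP k).indicator (fun q => f q.1) p ∂ρ
      = ∫ x, f x * (oStat x k - oStat x (k-1)) ∂μ := by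
    have h0 : ∫ x, (∫ y, (BP k).indicator (fun q => f q.1) (x, y) ∂ν) ∂μ
        = ∫ p, (BP k).indicator (fun q => f q.1) p ∂ρ := MeasureTheory.integral_integral hBPint
    rw [← h0]
    apply integral_congr_ae
    filter_upwards [hgood] with x hxg
    obtain b := main_bounds hxg hk hkn (cnt_exists hxg.1 hk hkn)
    have hlt : oStat x (k-1) < oStat x k := by rw [b.1]; exact b.2.2.1
    have hle1 : oStat x k ≤ 1 := by
      rw [b.1]; exact ((hxg.2 _).2).le
    have hsub : Set.Ioo (oStat x (k-1)) (oStat x k) ⊆ I01 :=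
      fun y hy => ⟨le_trans b.2.1 hy.1.le, le_trans hy.2.le hle1⟩
    have hsl : ∀ y, (BP k).indicator (fun q => f q.1) (x, y) =
        (Set.Ioo (oStat x (k-1)) (oStat x k)).indicator (fun _ => f x) y := by
      intro y
      by_cases hy : y ∈ Set.Ioo (oStat x (k-1)) (oStat x k)
      · have hm : ((x, y) : (Fin n → ℝ) × ℝ) ∈ BP k := ⟨good_mem hxg, hy.1, hy.2⟩
        rw [Set.indicator_of_mem hy, Set.indicator_of_mem hm]
      · rw [Set.indicator_of_notMem hy,
          Set.indicator_of_notMem (fun hc => hy ⟨hc.2.1, hc.2.2⟩)]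
    simp only [hsl]
    rw [MeasureTheory.integral_indicator measurableSet_Ioo, setIntegral_const]
    have hν : ν (Set.Ioo (oStat x (k-1)) (oStat x k))
        = ENNReal.ofReal (oStat x k - oStat x (k-1)) := by
      rw [hνdef, Measure.restrict_apply measurableSet_Ioo,
        Set.inter_eq_self_of_subset_left hsub, Real.volume_Ioo]
    rw [measureReal_def, hν, ENNReal.toReal_ofReal (by linarith), smul_eq_mul, mul_comm]
  -- slice identity for F
  have hFslice : ∀ x : Fin n → ℝ, Good x → ∀ y, F (x, y) =
      (Set.Ioo (oStat x k) (oStat x (k+1))).indicator (fun y => f (shiftK k x y)) y := by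
    intro x hxg y
    obtain b := main_bounds hxg hk hkn (cnt_exists hxg.1 hk hkn)
    by_cases hy : y ∈ Set.Ioo (oStat x k) (oStat x (k+1))
    · rw [Set.indicator_of_mem hy]
      have hlt1 : x (Tuple.sort x ⟨k-1, by omega⟩) < y := by
        rw [← b.1]
        exact hy.1
      have hmemA : (x, y) ∈ AS k (Tuple.sort x ⟨k-1, by omega⟩) :=
        ⟨good_mem hxg, cnt_exists hxg.1 hk hkn, hlt1, hy.2⟩
      exact Set.indicator_of_mem (Set.mem_iUnion.mpr ⟨_, hmemA⟩) g
    · rw [Set.indicator_of_notMem hy]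
      apply Set.indicator_of_notMem
      intro hc
      obtain ⟨i, hi⟩ := Set.mem_iUnion.mp hc
      obtain bi := main_bounds hxg hk hkn hi.2.1
      exact hy ⟨by rw [bi.1]; exact hi.2.2.1, hi.2.2.2⟩
  have hIoosub : ∀ x : Fin n → ℝ, Good x →
      Set.Ioo (oStat x k) (oStat x (k+1)) ⊆ I01 := by
    intro x hxg y hy
    obtain b := main_bounds hxg hk hkn (cnt_exists hxg.1 hk hkn)
    have h0 : (0:ℝ) ≤ oStat x k := by rw [b.1]; exact ((hxg.2 _).1).le
    exact ⟨le_trans h0 hy.1.le, le_trans hy.2.le b.2.2.2.2.1⟩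
  have hab : ∀ x : Fin n → ℝ, Good x → oStat x k ≤ oStat x (k+1) := by
    intro x hxg
    obtain b := main_bounds hxg hk hkn (cnt_exists hxg.1 hk hkn)
    rw [b.1]
    exact b.2.2.2.1.le
  -- the inner integral identity
  have hinner : (fun x => ∫ y in (oStat x k)..(oStat x (k+1)), f (shiftK k x y))
      =ᵐ[μ] (fun x => ∫ y, F (x, y) ∂ν) := by
    filter_upwards [hgood] with x hxg
    have h1 : (fun y => F (x, y)) =
        (Set.Ioo (oStat x k) (oStat x (k+1))).indicator (fun y => f (shiftK k x y)) :=
      funext (hFslice x hxg)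
    rw [h1, MeasureTheory.integral_indicator measurableSet_Ioo, hνdef,
      Measure.restrict_restrict measurableSet_Ioo,
      Set.inter_eq_self_of_subset_left (hIoosub x hxg),
      ← MeasureTheory.integral_Ioc_eq_integral_Ioo,
      ← intervalIntegral.integral_of_le (hab x hxg)]
  have hstep3 : ∫ x, (∫ y in (oStat x k)..(oStat x (k+1)), f (shiftK k x y)) ∂μ
      = ∫ p, F p ∂ρ := by
    have h0 : ∫ x, (∫ y, F (x, y) ∂ν) ∂μ = ∫ p, F p ∂ρ :=
      MeasureTheory.integral_integral hFint
    rw [← h0]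
    exact integral_congr_ae hinner
  -- integrability of the various integrands over μ
  have intg1 : Integrable (fun x => ∫ y in (oStat x k)..(oStat x (k+1)), f (shiftK k x y)) μ :=
    (hFint.integral_prod_left).congr hinner.symm
  have hbd : ∀ᵐ x ∂μ, 0 ≤ oStat x (k-1) ∧ oStat x (k-1) < oStat x k ∧
      oStat x k < oStat x (k+1) ∧ oStat x (k+1) ≤ 1 := by
    filter_upwards [hgood] with x hxg
    obtain b := main_bounds hxg hk hkn (cnt_exists hxg.1 hk hkn)
    refine ⟨b.2.1, by rw [b.1]; exact b.2.2.1, by rw [b.1]; exact b.2.2.2.1, b.2.2.2.2.1⟩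
  have intg2 : Integrable (fun x => (oStat x (k+1) - oStat x k) * f x) μ := by
    apply Integrable.mono' hfi.abs
    · exact (((measurable_oStat (k+1)).sub (measurable_oStat k)).aestronglyMeasurable).mul
        hf.aestronglyMeasurable
    · filter_upwards [hbd] with x hb
      rw [Real.norm_eq_abs, abs_mul]
      have h1 : |oStat x (k+1) - oStat x k| ≤ 1 := abs_le.mpr ⟨by linarith, by linarith⟩
      calc |oStat x (k+1) - oStat x k| * |f x| ≤ 1 * |f x| :=
            mul_le_mul_of_nonneg_right h1 (abs_nonneg _)
        _ = |f x| := one_mul _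
  have intg3 : Integrable (fun x => f x * (oStat x k - oStat x (k-1))) μ := by
    apply Integrable.mono' hfi.abs
    · exact hf.aestronglyMeasurable.mul
        (((measurable_oStat k).sub (measurable_oStat (k-1))).aestronglyMeasurable)
    · filter_upwards [hbd] with x hb
      rw [Real.norm_eq_abs, abs_mul]
      have h1 : |oStat x k - oStat x (k-1)| ≤ 1 := abs_le.mpr ⟨by linarith, by linarith⟩
      calc |f x| * |oStat x k - oStat x (k-1)| ≤ |f x| * 1 :=
            mul_le_mul_of_nonneg_left h1 (abs_nonneg _)
        _ = |f x| := mul_one _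
  have intg4 : Integrable
      (fun x => f x * (oStat x (k+1) - 2*oStat x k + oStat x (k-1))) μ := by
    apply Integrable.mono' (hfi.abs.const_mul 2)
    · exact hf.aestronglyMeasurable.mul
        ((((measurable_oStat (k+1)).sub ((measurable_oStat k).const_mul 2)).add
          (measurable_oStat (k-1))).aestronglyMeasurable)
    · filter_upwards [hbd] with x hb
      rw [Real.norm_eq_abs, abs_mul]
      have h1 : |oStat x (k+1) - 2*oStat x k + oStat x (k-1)| ≤ 2 :=
        abs_le.mpr ⟨by linarith, by linarith⟩
      calc |f x| * |oStat x (k+1) - 2*oStat x k + oStat x (k-1)| ≤ |f x| * 2 :=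
            mul_le_mul_of_nonneg_left h1 (abs_nonneg _)
        _ = 2 * |f x| := mul_comm _ _
  -- split of the inner integral
  have hsplit : ∀ᵐ x ∂μ, (∫ y in (oStat x k)..(oStat x (k+1)), (f (shiftK k x y) - f x))
      = (∫ y in (oStat x k)..(oStat x (k+1)), f (shiftK k x y))
        - (oStat x (k+1) - oStat x k) * f x := by
    filter_upwards [hFint.prod_right_ae, hgood] with x hxi hxg
    have hint2 : IntervalIntegrable (fun y => f (shiftK k x y)) volume
        (oStat x k) (oStat x (k+1)) := by
      have h1 : Integrable (fun y => F (x, y)) ν := hxi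
      rw [funext (hFslice x hxg),
        integrable_indicator_iff measurableSet_Ioo] at h1
      rw [IntegrableOn, hνdef, Measure.restrict_restrict measurableSet_Ioo,
        Set.inter_eq_self_of_subset_left (hIoosub x hxg)] at h1
      rw [intervalIntegrable_iff_integrableOn_Ioo_of_le (hab x hxg)]
      exact h1
    rw [intervalIntegral.integral_sub hint2 intervalIntegrable_const,
      intervalIntegral.integral_const, smul_eq_mul]
  -- final assembly
  have hRHS : ∫ x, (∫ y in (oStat x k)..(oStat x (k+1)), (f (shiftK k x y) - f x)) ∂μ
      = - ∫ x, f x * (oStat x (k+1) - 2*oStat x k + oStat x (k-1)) ∂μ := by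
    rw [integral_congr_ae hsplit]
    rw [integral_sub intg1 intg2]
    rw [hstep3, hFtoB, hstep2]
    rw [← integral_sub intg3 intg2]
    rw [← integral_neg]
    apply integral_congr_ae
    apply Filter.Eventually.of_forall
    intro x
    ring
  show -((n:ℝ)+1)*((n:ℝ)+2) *
      ∫ x, f x * (oStat x (k+1) - 2*oStat x k + oStat x (k-1)) ∂μ
    = ((n:ℝ)+1)*((n:ℝ)+2) *
      ∫ x, (∫ y in (oStat x k)..(oStat x (k+1)), (f (shiftK k x y) - f x)) ∂μ
  rw [hRHS]
  ring
end

section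
/- Let the variance statistic σ²(x) = (1/n) ∑_{i=1}^n (x_i − x̄)², where x̄ = (1/n) ∑_{i=1}^n x_i, viewed as a function on [0,1]^n. Define I(f,k) = −(n+1)(n+2) ∫_{[0,1]^n} f(x)·(x_{(k+1)} − 2x_{(k)} + x_{(k−1)}) dx (conventions x_{(0)}=0, x_{(n+1)}=1). Then for every k ∈ {1,...,n}, I(σ², k) = (n+2)(2k − n − 1) / (n²(n+3)). -/
open MeasureTheory Finset

noncomputable def Nle {n : ℕ} (t : ℝ) (x : Fin n → ℝ) : ℕ :=
  (Finset.univ.filter (fun i => x i ≤ t)).card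



/-- number of coordinates ≤ t -/
lemma sorted_get_le_iff (t : ℝ) : ∀ (l : List ℝ), l.Pairwise (· ≤ ·) → ∀ (i : ℕ) (h : i < l.length),
    (l.get ⟨i, h⟩ ≤ t ↔ i < l.countP (fun a => decide (a ≤ t))) := by
  intro l hl
  induction l with
  | nil => intro i h; simp at h
  | cons a l ih =>
    rw [List.pairwise_cons] at hl
    intro i h
    by_cases hat : a ≤ t
    · rcases i with _ | i
      · simp [List.countP_cons, hat]
      · have h' : i < l.length := by simpa using h
        have := ih hl.2 i h'
        simp only [List.countP_cons, hat, List.get, decide_eq_true_eq, if_pos] at this ⊢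
        rw [this]
        simp
    · have hcount : l.countP (fun a => decide (a ≤ t)) = 0 := by
        rw [List.countP_eq_zero]
        intro b hb
        simp only [decide_eq_true_eq]
        intro hbt
        exact hat (le_trans (hl.1 b hb) hbt)
      rcases i with _ | i
      · simp [List.countP_cons, hat, hcount]
      · have h' : i < l.length := by simpa using h
        simp only [List.countP_cons, hat, hcount, List.get]
        constructor
        · intro hle
          exact absurd (le_trans (hl.1 _ (l.get_mem ⟨i, h'⟩)) hle) hat
        · simp


lemma Nle_le {n : ℕ} (t : ℝ) (x : Fin n → ℝ) : Nle t x ≤ n := by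
  simpa [Nle] using card_filter_le (univ : Finset (Fin n)) _

lemma sortlen {n : ℕ} (x : Fin n → ℝ) :
    ((Finset.univ.val.map x).sort (· ≤ ·)).length = n := by
  rw [Multiset.length_sort, Multiset.card_map]
  simp

lemma countP_sort_eq {n : ℕ} (t : ℝ) (x : Fin n → ℝ) :
    ((Finset.univ.val.map x).sort (· ≤ ·)).countP (fun a => decide (a ≤ t)) = Nle t x := by
  have h1 : (((Finset.univ.val.map x).sort (· ≤ ·) : List ℝ) : Multiset ℝ)
      = Finset.univ.val.map x := Multiset.sort_eq _ _
  have := Multiset.coe_countP (fun a => decide (a ≤ t)) ((Finset.univ.val.map x).sort (· ≤ ·))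
  rw [h1] at this
  simp only [Bool.decide_eq_true] at this
  rw [← this, Multiset.countP_map]
  simp [Nle, Finset.card, Finset.filter_val]

lemma oStat_le_iff {n : ℕ} (x : Fin n → ℝ) (j : ℕ) (hj1 : 1 ≤ j) (hjn : j ≤ n) (t : ℝ) :
    oStat x j ≤ t ↔ j ≤ Nle t x := by
  have hj0 : j ≠ 0 := by omega
  have hlen : j - 1 < ((Finset.univ.val.map x).sort (· ≤ ·)).length := by
    rw [sortlen]; omega
  rw [oStat, if_neg hj0, if_pos hjn, List.getD_eq_getElem _ _ hlen]
  have := sorted_get_le_iff t _ (Multiset.pairwise_sort _ _) (j-1) hlen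
  rw [countP_sort_eq] at this
  simp only [List.get_eq_getElem] at this
  rw [this]
  omega


lemma oStat_mem {n : ℕ} {x : Fin n → ℝ} (hx : x ∈ Set.Icc (0 : Fin n → ℝ) 1) (j : ℕ) :
    oStat x j ∈ Set.Icc (0:ℝ) 1 := by
  rcases hx with ⟨hx0, hx1⟩
  by_cases hj0 : j = 0
  · simp [oStat, hj0]
  · by_cases hjn : j ≤ n
    · have hlen : j - 1 < ((Finset.univ.val.map x).sort (· ≤ ·)).length := by
        rw [sortlen]; omega
      rw [oStat, if_neg hj0, if_pos hjn, List.getD_eq_getElem _ _ hlen]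
      have hmem : ((Finset.univ.val.map x).sort (· ≤ ·))[j-1] ∈
          ((Finset.univ.val.map x).sort (· ≤ ·)) := List.getElem_mem hlen
      have hmem2 : ((Finset.univ.val.map x).sort (· ≤ ·))[j-1] ∈ Finset.univ.val.map x := by
        rw [← Multiset.mem_sort (· ≤ ·)]
        exact hmem
      rcases Multiset.mem_map.1 hmem2 with ⟨i, _, hi⟩
      rw [← hi]
      exact ⟨hx0 i, hx1 i⟩
    · simp [oStat, hj0, hjn]

lemma Nle_set_eq {n : ℕ} (x : Fin n → ℝ) (j : ℕ) (hj1 : 1 ≤ j) (hjn : j ≤ n) :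
    {t : ℝ | Nle t x < j} = Set.Iio (oStat x j) := by
  ext t
  simp only [Set.mem_setOf_eq, Set.mem_Iio]
  rw [← not_le, ← not_le, oStat_le_iff x j hj1 hjn t]

/-- integral representation of order statistics -/
lemma oStat_integral {n : ℕ} {x : Fin n → ℝ} (hx : x ∈ Set.Icc (0 : Fin n → ℝ) 1)
    (j : ℕ) (hj : j ≤ n + 1) :
    oStat x j = ∫ t in Set.Ioc (0:ℝ) 1, (if Nle t x < j then (1:ℝ) else 0) := by
  by_cases hj0 : j = 0
  · simp [oStat, hj0]
  · by_cases hjn : j ≤ n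
    · have h1 : (fun t : ℝ => if Nle t x < j then (1:ℝ) else 0)
          = Set.indicator (Set.Iio (oStat x j)) (fun _ => (1:ℝ)) := by
        funext t
        rw [Set.indicator_apply]
        congr 1
        rw [← Set.mem_Iio, ← Nle_set_eq x j (by omega) hjn]
        simp
      rw [h1, setIntegral_indicator measurableSet_Iio]
      rcases oStat_mem hx j with ⟨h0, hle1⟩
      have : Set.Ioc (0:ℝ) 1 ∩ Set.Iio (oStat x j) = Set.Ioo 0 (oStat x j) := by
        ext t
        simp only [Set.mem_inter_iff, Set.mem_Ioc, Set.mem_Iio, Set.mem_Ioo]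
        constructor
        · rintro ⟨⟨h1', _⟩, h3⟩; exact ⟨h1', h3⟩
        · rintro ⟨h1', h2⟩; exact ⟨⟨h1', le_trans (le_of_lt h2) hle1⟩, h2⟩
      rw [this]
      simp [Real.volume_Ioo, ENNReal.toReal_ofReal, h0]
    · have hj' : j = n + 1 := by omega
      have h1 : ∀ t : ℝ, (if Nle t x < j then (1:ℝ) else 0) = 1 := by
        intro t
        rw [if_pos]
        have := Nle_le t x
        omega
      simp only [h1]
      simp [oStat, hj0, hjn, Real.volume_Ioc]


lemma beta_nat (b : ℕ) : ∀ a : ℕ, ∫ t in (0:ℝ)..1, t^a * (1-t)^b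
    = (Nat.factorial a) * (Nat.factorial b) / (Nat.factorial (a+b+1)) := by
  induction b with
  | zero =>
    intro a
    simp only [pow_zero, mul_one, Nat.factorial]
    rw [integral_pow]
    have : (Nat.factorial (a+1) : ℝ) = (a+1) * Nat.factorial a := by
      rw [Nat.factorial_succ]; push_cast; ring
    have ha : (Nat.factorial a : ℝ) ≠ 0 := by positivity
    have ha1 : ((a:ℝ)+1) ≠ 0 := by positivity
    rw [show a.succ * a.factorial = a.factorial * a.succ from by ring]
    push_cast
    field_simp
    simp
  | succ b ih =>
    intro a
    have key : ∀ t : ℝ, t^a * (1-t)^(b+1) = t^a * (1-t)^b - t^(a+1) * (1-t)^b := by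
      intro t; ring
    simp only [key]
    rw [intervalIntegral.integral_sub]
    · rw [ih a, ih (a+1)]
      have e1 : (Nat.factorial (a+b+2) : ℝ) = (a+b+2) * Nat.factorial (a+b+1) := by
        rw [show a+b+2 = (a+b+1)+1 by ring, Nat.factorial_succ]; push_cast; ring
      have e2 : (Nat.factorial (b+1) : ℝ) = (b+1) * Nat.factorial b := by
        rw [Nat.factorial_succ]; push_cast; ring
      have e3 : (Nat.factorial (a+1) : ℝ) = (a+1) * Nat.factorial a := by
        rw [Nat.factorial_succ]; push_cast; ring
      have h1 : (Nat.factorial (a+b+1) : ℝ) ≠ 0 := by positivity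
      have h2 : (Nat.factorial (a+b+2) : ℝ) ≠ 0 := by positivity
      have h4 : ((a:ℝ)+(b:ℝ)+2) ≠ 0 := by positivity
      simp only [show a+1+b+1 = a+b+2 from by omega, show a+(b+1)+1 = a+b+2 from by omega,
        show a+b+1+1 = a+b+2 from by omega]
      rw [e1, e2, e3]
      generalize (Nat.factorial (a+b+1) : ℝ) = F at h1 ⊢
      field_simp
      ring
    · exact (Continuous.intervalIntegrable (by continuity) _ _)
    · exact (Continuous.intervalIntegrable (by continuity) _ _)

lemma beta_nat' (a b : ℕ) : ∫ t in Set.Ioc (0:ℝ) 1, t^a * (1-t)^b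
    = (Nat.factorial a) * (Nat.factorial b) / (Nat.factorial (a+b+1)) := by
  rw [← intervalIntegral.integral_of_le (by norm_num : (0:ℝ) ≤ 1), beta_nat]


/-- product over a box splits -/
lemma integral_box {n : ℕ} (s : Fin n → Set ℝ) (hs : ∀ i, MeasurableSet (s i))
    (f : Fin n → ℝ → ℝ) :
    ∫ x in Set.pi Set.univ s, ∏ i, f i (x i) = ∏ i, ∫ u in s i, f i u := by
  have hpi : MeasurableSet (Set.pi Set.univ s) := MeasurableSet.univ_pi hs
  rw [← integral_indicator hpi]
  have key : (Set.pi Set.univ s).indicator (fun x => ∏ i, f i (x i))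
      = fun x => ∏ i, (s i).indicator (f i) (x i) := by
    funext x
    by_cases hx : x ∈ Set.pi Set.univ s
    · rw [Set.indicator_of_mem hx]
      apply Finset.prod_congr rfl
      intro i _
      rw [Set.indicator_of_mem (hx i (Set.mem_univ i))]
    · rw [Set.indicator_of_notMem hx]
      rcases (by simpa [Set.mem_pi] using hx : ∃ i, x i ∉ s i) with ⟨i, hi⟩
      symm
      apply Finset.prod_eq_zero (Finset.mem_univ i)
      rw [Set.indicator_of_notMem hi]
    
  rw [key, MeasureTheory.volume_pi, MeasureTheory.integral_fintype_prod_eq_prod (ι := Fin n)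
    (f := fun i => (s i).indicator (f i))]
  exact Finset.prod_congr rfl fun i _ => integral_indicator (hs i)

-- 1-D moments
lemma mom0_lo {t : ℝ} (ht0 : 0 ≤ t) : ∫ u in Set.Icc (0:ℝ) t, (1:ℝ) = t := by
  simp [Real.volume_Icc, ENNReal.toReal_ofReal, ht0]

lemma mom1_lo {t : ℝ} (ht0 : 0 ≤ t) : ∫ u in Set.Icc (0:ℝ) t, u = t^2/2 := by
  rw [MeasureTheory.integral_Icc_eq_integral_Ioc,
    ← intervalIntegral.integral_of_le ht0]
  simp [integral_id]

lemma mom2_lo {t : ℝ} (ht0 : 0 ≤ t) : ∫ u in Set.Icc (0:ℝ) t, u^2 = t^3/3 := by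
  rw [MeasureTheory.integral_Icc_eq_integral_Ioc, ← intervalIntegral.integral_of_le ht0,
    integral_pow]
  ring

lemma mom0_hi {t : ℝ} (ht1 : t ≤ 1) : ∫ u in Set.Ioc t 1, (1:ℝ) = 1 - t := by
  simp [Real.volume_Ioc, ENNReal.toReal_ofReal, sub_nonneg.2 ht1]

lemma mom1_hi {t : ℝ} (ht1 : t ≤ 1) : ∫ u in Set.Ioc t 1, u = (1-t^2)/2 := by
  rw [← intervalIntegral.integral_of_le ht1]
  simp [integral_id]

lemma mom2_hi {t : ℝ} (ht1 : t ≤ 1) : ∫ u in Set.Ioc t 1, u^2 = (1-t^3)/3 := by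
  rw [← intervalIntegral.integral_of_le ht1, integral_pow]
  ring


lemma sq_sum_expand {n : ℕ} (g : Fin n → ℝ) :
    (∑ i, g i)^2 = ∑ i, (g i)^2 + ∑ p ∈ univ.offDiag, g p.1 * g p.2 := by
  rw [sq, Finset.sum_mul_sum, ← Finset.sum_product']
  rw [show (univ ×ˢ univ : Finset (Fin n × Fin n)) = univ.diag ∪ univ.offDiag from
    (Finset.diag_union_offDiag _).symm]
  rw [Finset.sum_union (Finset.disjoint_diag_offDiag _), Finset.sum_diag]
  simp [sq]

lemma offDiag_sum {n : ℕ} (g : Fin n → ℝ) :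
    ∑ p ∈ univ.offDiag, g p.1 * g p.2 = (∑ i, g i)^2 - ∑ i, (g i)^2 := by
  rw [sq_sum_expand]; ring

lemma f_expand (n : ℕ) (hn : 1 ≤ n) (x : Fin n → ℝ) :
    (1/(n:ℝ)) * ∑ i, (x i - (1/(n:ℝ)) * ∑ i', x i')^2
    = (((n:ℝ)-1)/(n:ℝ)^2) * ∑ i, (x i)^2
      - (1/(n:ℝ)^2) * ∑ p ∈ univ.offDiag, x p.1 * x p.2 := by
  have hne : (n:ℝ) ≠ 0 := by positivity
  set S1 := ∑ i, x i with hS1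
  set S2 := ∑ i, (x i)^2 with hS2
  set D := ∑ p ∈ univ.offDiag, x p.1 * x p.2 with hD
  have key : S1^2 = S2 + D := sq_sum_expand x
  have expand : ∑ i, (x i - (1/(n:ℝ)) * S1)^2
      = S2 - 2*(1/(n:ℝ))*S1*S1 + n*((1/(n:ℝ))*S1)^2 := by
    have : ∀ i : Fin n, (x i - (1/(n:ℝ)) * S1)^2
        = (x i)^2 - 2*(1/(n:ℝ))*S1 * x i + ((1/(n:ℝ))*S1)^2 := fun i => by ring
    rw [Finset.sum_congr rfl (fun i _ => this i), Finset.sum_add_distrib,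
      Finset.sum_sub_distrib, ← Finset.mul_sum, Finset.sum_const, Finset.card_univ,
      Fintype.card_fin, nsmul_eq_mul, ← hS1, ← hS2]
  rw [expand]
  have h2 : S1 * S1 = S2 + D := by rw [← sq]; exact key
  field_simp
  linear_combination (-1:ℝ) * h2

lemma prod_single {n : ℕ} (i : Fin n) (a b : Fin n → ℝ) (hb : ∀ l, b l ≠ 0) :
    ∏ l, (if l = i then a l else b l) = a i * (∏ l, b l) / b i := by
  rw [← Finset.mul_prod_erase univ _ (Finset.mem_univ i), if_pos rfl]
  have h1 : ∏ l ∈ univ.erase i, (if l = i then a l else b l) = ∏ l ∈ univ.erase i, b l := by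
    apply Finset.prod_congr rfl
    intro l hl
    rw [if_neg (Finset.mem_erase.1 hl).1]
  rw [h1]
  have h2 : ∏ l, b l = b i * ∏ l ∈ univ.erase i, b l :=
    (Finset.mul_prod_erase univ b (Finset.mem_univ i)).symm
  rw [h2]
  field_simp [hb i]

lemma prod_double {n : ℕ} (i j : Fin n) (hij : i ≠ j) (a b : Fin n → ℝ) (hb : ∀ l, b l ≠ 0) :
    ∏ l, (if l = i ∨ l = j then a l else b l) = a i * a j * (∏ l, b l) / (b i * b j) := by
  have hji : j ∈ univ.erase i := Finset.mem_erase.2 ⟨fun h => hij h.symm, Finset.mem_univ j⟩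
  rw [← Finset.mul_prod_erase univ _ (Finset.mem_univ i), if_pos (Or.inl rfl),
    ← Finset.mul_prod_erase _ _ hji, if_pos (Or.inr rfl)]
  have h1 : ∏ l ∈ (univ.erase i).erase j, (if l = i ∨ l = j then a l else b l)
      = ∏ l ∈ (univ.erase i).erase j, b l := by
    apply Finset.prod_congr rfl
    intro l hl
    have h2 := Finset.mem_erase.1 hl
    have h3 := Finset.mem_erase.1 h2.2
    rw [if_neg (by tauto)]
  rw [h1]
  have h2 : ∏ l, b l = b i * (b j * ∏ l ∈ (univ.erase i).erase j, b l) := by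
    rw [Finset.mul_prod_erase _ _ hji, Finset.mul_prod_erase univ b (Finset.mem_univ i)]
  rw [h2]
  field_simp [hb i, hb j]


lemma sum_ite_const {n : ℕ} (S : Finset (Fin n)) (a b : ℝ) :
    ∑ i, (if i ∈ S then a else b) = (S.card : ℝ) * a + ((n:ℝ) - S.card) * b := by
  rw [Finset.sum_ite]
  have h1 : univ.filter (fun x => x ∈ S) = S := by ext; simp
  have h2 : univ.filter (fun x => ¬ x ∈ S) = Sᶜ := by ext; simp
  rw [h1, h2, Finset.sum_const, Finset.sum_const, Finset.card_compl, Fintype.card_fin,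
    nsmul_eq_mul, nsmul_eq_mul, Nat.cast_sub (by simpa using Finset.card_le_univ S)]

noncomputable def Psi (n m : ℕ) (t : ℝ) : ℝ :=
  ( ((n:ℝ)^2 - n)/12 + (m:ℝ)/12 + (m:ℝ)*(n:ℝ)/6 - (m:ℝ)^2/4
    + ( ((n:ℝ) - (n:ℝ)^2)/6 + ((m:ℝ)*(n:ℝ) - (m:ℝ))/6 ) * t
    + ( ((n:ℝ)^2 - (n:ℝ))/12 ) * t^2 ) / (n:ℝ)^2

lemma box_val (n : ℕ) (hn : 1 ≤ n) {t : ℝ} (ht : t ∈ Set.Ioo (0:ℝ) 1) (S : Finset (Fin n)) :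
    ∫ x in Set.pi Set.univ (fun l => if l ∈ S then Set.Icc (0:ℝ) t else Set.Ioc t 1),
      ((1/(n:ℝ)) * ∑ i, (x i - (1/(n:ℝ)) * ∑ i', x i')^2)
    = t^(S.card) * (1-t)^(n - S.card) * Psi n S.card t := by
  obtain ⟨ht0, ht1⟩ := ht
  have hne : (n:ℝ) ≠ 0 := by positivity
  have htne : t ≠ 0 := ne_of_gt ht0
  have ht1ne : 1 - t ≠ 0 := by linarith
  have hm : S.card ≤ n := by simpa using Finset.card_le_univ S
  set Is : Fin n → Set ℝ := fun l => if l ∈ S then Set.Icc (0:ℝ) t else Set.Ioc t 1 with hIs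
  have hms : ∀ l, MeasurableSet (Is l) := by
    intro l; rw [hIs]; dsimp only
    split_ifs
    · exact measurableSet_Icc
    · exact measurableSet_Ioc
  have hsub : Set.pi Set.univ Is ⊆ Set.Icc (0 : Fin n → ℝ) 1 := by
    rw [← Set.pi_univ_Icc]
    apply Set.pi_mono
    intro l _
    rw [hIs]; dsimp only
    split_ifs
    · exact Set.Icc_subset_Icc le_rfl (le_of_lt ht1)
    · exact fun u hu => ⟨le_of_lt (lt_of_le_of_lt (le_of_lt ht0) (lt_of_lt_of_le hu.1 le_rfl)), hu.2⟩
  have hInt : ∀ (g : (Fin n → ℝ) → ℝ), Continuous g → IntegrableOn g (Set.pi Set.univ Is) := by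
    intro g hg
    exact ((hg.continuousOn).integrableOn_compact isCompact_Icc).mono_set hsub
  set p : Fin n → ℝ := fun l => if l ∈ S then t else 1-t with hp
  set m1 : Fin n → ℝ := fun l => if l ∈ S then t^2/2 else (1-t^2)/2 with hm1
  set m2 : Fin n → ℝ := fun l => if l ∈ S then t^3/3 else (1-t^3)/3 with hm2
  have hpne : ∀ l, p l ≠ 0 := by
    intro l; rw [hp]; dsimp only; split_ifs
    · exact htne
    · exact ht1ne
  have hI1 : ∀ l, ∫ u in Is l, (1:ℝ) = p l := by
    intro l; rw [hIs, hp]; dsimp only; split_ifs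
    · exact mom0_lo (le_of_lt ht0)
    · exact mom0_hi (le_of_lt ht1)
  have hIu : ∀ l, ∫ u in Is l, u = m1 l := by
    intro l; rw [hIs, hm1]; dsimp only; split_ifs
    · exact mom1_lo (le_of_lt ht0)
    · exact mom1_hi (le_of_lt ht1)
  have hIu2 : ∀ l, ∫ u in Is l, u^2 = m2 l := by
    intro l; rw [hIs, hm2]; dsimp only; split_ifs
    · exact mom2_lo (le_of_lt ht0)
    · exact mom2_hi (le_of_lt ht1)
  set P : ℝ := ∏ l, p l with hPdef
  have hP : P = t^(S.card) * (1-t)^(n - S.card) := by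
    rw [hPdef, hp]
    rw [Finset.prod_ite (fun _ => t) (fun _ => 1-t)]
    have h1 : univ.filter (fun x => x ∈ S) = S := by ext; simp
    have h2 : univ.filter (fun x => ¬ x ∈ S) = Sᶜ := by ext; simp
    rw [h1, h2, Finset.prod_const, Finset.prod_const, Finset.card_compl, Fintype.card_fin]
  -- squared coordinate integrals
  have hsq : ∀ i, ∫ x in Set.pi Set.univ Is, (x i)^2 = m2 i * P / p i := by
    intro i
    have step : (fun x : Fin n → ℝ => (x i)^2)
        = fun x => ∏ l, (fun u => if l = i then u^2 else (1:ℝ)) (x l) := by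
      funext x
      simp only []
      rw [Finset.prod_ite_eq' univ i (fun l => (x l)^2)]
      simp
    rw [step]
    rw [integral_box Is hms (fun l u => if l = i then u^2 else (1:ℝ))]
    have factor : ∀ l, (∫ u in Is l, (if l = i then u^2 else (1:ℝ)))
        = if l = i then m2 l else p l := by
      intro l
      by_cases h : l = i
      · simp only [h, if_pos rfl]; exact hIu2 i
      · simp only [if_neg h]; exact hI1 l
    rw [Finset.prod_congr rfl (fun l _ => factor l)]
    exact prod_single i m2 p hpne
  -- mixed coordinate integrals
  have hmix : ∀ i j, i ≠ j → ∫ x in Set.pi Set.univ Is, (x i) * (x j)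
      = m1 i * m1 j * P / (p i * p j) := by
    intro i j hij
    have step : (fun x : Fin n → ℝ => (x i) * (x j))
        = fun x => ∏ l, (fun u => if l = i ∨ l = j then u else (1:ℝ)) (x l) := by
      funext x
      simp only []
      rw [prod_double i j hij (fun l => x l) (fun _ => (1:ℝ)) (fun _ => one_ne_zero)]
      simp
    rw [step]
    rw [integral_box Is hms (fun l u => if l = i ∨ l = j then u else (1:ℝ))]
    have factor : ∀ l, (∫ u in Is l, (if l = i ∨ l = j then u else (1:ℝ)))
        = if l = i ∨ l = j then m1 l else p l := by
      intro l
      by_cases h : l = i ∨ l = j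
      · simp only [if_pos h]; exact hIu l
      · simp only [if_neg h]; exact hI1 l
    rw [Finset.prod_congr rfl (fun l _ => factor l)]
    exact prod_double i j hij m1 p hpne
  -- expand the integrand
  have hfe : ∀ x : Fin n → ℝ, (1/(n:ℝ)) * ∑ i, (x i - (1/(n:ℝ)) * ∑ i', x i')^2
      = (((n:ℝ)-1)/(n:ℝ)^2) * ∑ i, (x i)^2
        - (1/(n:ℝ)^2) * ∑ q ∈ univ.offDiag, x q.1 * x q.2 := fun x => f_expand n hn x
  simp only [hfe]
  have hint1 : IntegrableOn (fun x : Fin n → ℝ => ∑ i, (x i)^2) (Set.pi Set.univ Is) := by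
    apply hInt
    exact continuous_finset_sum _ fun i _ => (continuous_apply i).pow 2
  have hint2 : IntegrableOn (fun x : Fin n → ℝ => ∑ q ∈ univ.offDiag, x q.1 * x q.2)
      (Set.pi Set.univ Is) := by
    apply hInt
    exact continuous_finset_sum _ fun q _ => (continuous_apply q.1).mul (continuous_apply q.2)
  rw [integral_sub (hint1.const_mul _) (hint2.const_mul _), integral_const_mul,
    integral_const_mul, integral_finset_sum, integral_finset_sum]
  rotate_left
  · intro q hq
    apply hInt
    exact (continuous_apply q.1).mul (continuous_apply q.2)
  · intro i _
    apply hInt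
    exact (continuous_apply i).pow 2
  -- evaluate the sums
  have e1 : ∑ i, ∫ x in Set.pi Set.univ Is, (x i)^2
      = (S.card : ℝ) * ((t^3/3) * P / t) + ((n:ℝ) - S.card) * (((1-t^3)/3) * P / (1-t)) := by
    rw [Finset.sum_congr rfl (fun i _ => hsq i)]
    have h : ∀ i : Fin n, m2 i * P / p i
        = if i ∈ S then (t^3/3) * P / t else ((1-t^3)/3) * P / (1-t) := by
      intro i
      rw [hm2, hp]
      dsimp only
      split_ifs <;> rfl
    rw [Finset.sum_congr rfl (fun i _ => h i), sum_ite_const]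
  have e2 : ∑ q ∈ univ.offDiag, ∫ x in Set.pi Set.univ Is, x q.1 * x q.2
      = (((S.card : ℝ) * ((t^2/2)/t) + ((n:ℝ) - S.card) * (((1-t^2)/2)/(1-t)))^2
        - ((S.card : ℝ) * (((t^2/2)/t)^2) + ((n:ℝ) - S.card) * ((((1-t^2)/2)/(1-t))^2))) * P := by
    have hterm : ∀ q ∈ univ.offDiag, (∫ x in Set.pi Set.univ Is, x q.1 * x q.2)
        = (m1 q.1 / p q.1) * (m1 q.2 / p q.2) * P := by
      intro q hq
      have hne' : q.1 ≠ q.2 := (Finset.mem_offDiag.1 hq).2.2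
      rw [hmix q.1 q.2 hne']
      field_simp
    rw [Finset.sum_congr rfl hterm, ← Finset.sum_mul, offDiag_sum (fun l => m1 l / p l)]
    have hmu : ∀ l : Fin n, m1 l / p l
        = if l ∈ S then (t^2/2)/t else ((1-t^2)/2)/(1-t) := by
      intro l
      rw [hm1, hp]
      dsimp only
      split_ifs <;> rfl
    have hmu2 : ∀ l : Fin n, (m1 l / p l)^2
        = if l ∈ S then ((t^2/2)/t)^2 else (((1-t^2)/2)/(1-t))^2 := by
      intro l
      rw [hmu l]
      split_ifs <;> rfl
    rw [Finset.sum_congr rfl (fun l _ => hmu l), Finset.sum_congr rfl (fun l _ => hmu2 l),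
      sum_ite_const, sum_ite_const]
  rw [e1, e2, hP, Psi]
  have hc : ((n:ℝ) - S.card) = ((n - S.card : ℕ) : ℝ) := by
    rw [Nat.cast_sub hm]
  field_simp
  ring


lemma slice_val (n : ℕ) (hn : 1 ≤ n) {t : ℝ} (ht : t ∈ Set.Ioo (0:ℝ) 1) (m : ℕ) :
    ∫ x in Set.Icc (0 : Fin n → ℝ) 1,
      ((1/(n:ℝ)) * ∑ i, (x i - (1/(n:ℝ)) * ∑ i', x i')^2)
        * (if Nle t x = m then (1:ℝ) else 0)
    = (n.choose m : ℝ) * (t^m * (1-t)^(n-m) * Psi n m t) := by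
  obtain ⟨ht0, ht1⟩ := ht
  set f : (Fin n → ℝ) → ℝ :=
    fun x => (1/(n:ℝ)) * ∑ i, (x i - (1/(n:ℝ)) * ∑ i', x i')^2 with hf
  have hfc : Continuous f := by
    rw [hf]
    apply continuous_const.mul
    apply continuous_finset_sum
    intro i _
    exact ((continuous_apply i).sub (continuous_const.mul
      (continuous_finset_sum _ fun i' _ => continuous_apply i'))).pow 2
  set B : Finset (Fin n) → Set (Fin n → ℝ) :=
    fun S => Set.pi Set.univ (fun l => if l ∈ S then Set.Icc (0:ℝ) t else Set.Ioc t 1) with hB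
  have hmsB : ∀ S, MeasurableSet (B S) := by
    intro S
    apply MeasurableSet.univ_pi
    intro l
    split_ifs
    · exact measurableSet_Icc
    · exact measurableSet_Ioc
  have hsubB : ∀ S, B S ⊆ Set.Icc (0 : Fin n → ℝ) 1 := by
    intro S
    rw [hB, ← Set.pi_univ_Icc]
    apply Set.pi_mono
    intro l _
    split_ifs
    · exact Set.Icc_subset_Icc le_rfl (le_of_lt ht1)
    · exact fun u hu => ⟨le_of_lt (lt_of_lt_of_le ht0 (le_of_lt hu.1)), hu.2⟩
  -- pointwise identity on the cube
  have hpoint : ∀ x ∈ Set.Icc (0 : Fin n → ℝ) 1,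
      f x * (if Nle t x = m then (1:ℝ) else 0)
      = ∑ S ∈ Finset.powersetCard m Finset.univ, (B S).indicator f x := by
    intro x hx
    rcases hx with ⟨hx0, hx1⟩
    have hmem : ∀ S : Finset (Fin n), x ∈ B S ↔ S = Finset.univ.filter (fun i => x i ≤ t) := by
      intro S
      rw [hB]
      constructor
      · intro hxB
        ext l
        simp only [Finset.mem_filter, Finset.mem_univ, true_and]
        have := hxB l (Set.mem_univ l)
        dsimp only at this
        constructor
        · intro hl
          rw [if_pos hl] at this
          exact this.2
        · intro hl
          by_contra hns
          rw [if_neg hns] at this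
          exact absurd hl (not_le.2 this.1)
      · intro hS
        intro l _
        dsimp only
        subst hS
        by_cases hl : x l ≤ t
        · rw [if_pos (by simp [hl])]
          exact ⟨hx0 l, hl⟩
        · rw [if_neg (by simp [hl])]
          exact ⟨not_le.1 hl, hx1 l⟩
    classical
    simp only [Set.indicator_apply, hmem]
    simp only [Finset.sum_ite_eq' (Finset.powersetCard m Finset.univ) _ (fun _ => f x)]
    simp only [Finset.mem_powersetCard_univ]
    have hNle : (Finset.univ.filter (fun i => x i ≤ t)).card = Nle t x := rfl
    simp only [hNle]
    by_cases h : Nle t x = m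
    · simp [h, mul_comm]
    · simp [h]
  rw [setIntegral_congr_fun measurableSet_Icc hpoint]
  rw [integral_finset_sum]
  · have hterm : ∀ S ∈ Finset.powersetCard m Finset.univ,
        ∫ x in Set.Icc (0 : Fin n → ℝ) 1, (B S).indicator f x
        = t^m * (1-t)^(n-m) * Psi n m t := by
      intro S hS
      have hcard : S.card = m := (Finset.mem_powersetCard_univ).1 hS
      rw [setIntegral_indicator (hmsB S),
        Set.inter_eq_self_of_subset_right (hsubB S)]
      rw [hB]
      rw [box_val n hn ⟨ht0, ht1⟩ S, hcard]
    rw [Finset.sum_congr rfl hterm, Finset.sum_const, Finset.card_powersetCard,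
      Finset.card_univ, Fintype.card_fin, nsmul_eq_mul]
  · intro S _
    exact (IntegrableOn.mono_set ((hfc.continuousOn).integrableOn_compact isCompact_Icc)
      (Set.Subset.refl _)).indicator (hmsB S)


noncomputable def Gcl (n m : ℕ) : ℝ :=
  (( ((n:ℝ)^2 - (n:ℝ))/12 + (m:ℝ)/12 + (m:ℝ)*(n:ℝ)/6 - (m:ℝ)^2/4 ) / ((n:ℝ)+1)
    + ( ((n:ℝ) - (n:ℝ)^2)/6 + ((m:ℝ)*(n:ℝ) - (m:ℝ))/6 ) * ((m:ℝ)+1) / (((n:ℝ)+1)*((n:ℝ)+2))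
    + ( ((n:ℝ)^2 - (n:ℝ))/12 ) * ((m:ℝ)+1)*((m:ℝ)+2)
        / (((n:ℝ)+1)*((n:ℝ)+2)*((n:ℝ)+3))) / (n:ℝ)^2

lemma integrable_tpow (a b : ℕ) :
    IntegrableOn (fun t : ℝ => t^a * (1-t)^b) (Set.Ioc (0:ℝ) 1) := by
  apply IntegrableOn.mono_set (t := Set.Icc (0:ℝ) 1)
  · exact ((Continuous.continuousOn (by continuity)).integrableOn_compact isCompact_Icc)
  · exact Set.Ioc_subset_Icc_self

lemma Gval (n m : ℕ) (hn : 1 ≤ n) (hm : m ≤ n) :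
    ∫ t in Set.Ioc (0:ℝ) 1, (n.choose m : ℝ) * (t^m * (1-t)^(n-m) * Psi n m t)
    = Gcl n m := by
  have hA : ∀ t : ℝ, t^m * (1-t)^(n-m) * Psi n m t
      = ((((n:ℝ)^2 - (n:ℝ))/12 + (m:ℝ)/12 + (m:ℝ)*(n:ℝ)/6 - (m:ℝ)^2/4)/(n:ℝ)^2)
          * (t^m * (1-t)^(n-m))
        + ((((n:ℝ) - (n:ℝ)^2)/6 + ((m:ℝ)*(n:ℝ) - (m:ℝ))/6)/(n:ℝ)^2)
          * (t^(m+1) * (1-t)^(n-m))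
        + ((((n:ℝ)^2 - (n:ℝ))/12)/(n:ℝ)^2) * (t^(m+2) * (1-t)^(n-m)) := by
    intro t
    rw [Psi]
    ring
  simp only [hA]
  rw [integral_const_mul]
  set c1 : ℝ := (((n:ℝ)^2 - (n:ℝ))/12 + (m:ℝ)/12 + (m:ℝ)*(n:ℝ)/6 - (m:ℝ)^2/4)/(n:ℝ)^2 with hc1
  set c2 : ℝ := (((n:ℝ) - (n:ℝ)^2)/6 + ((m:ℝ)*(n:ℝ) - (m:ℝ))/6)/(n:ℝ)^2 with hc2
  set c3 : ℝ := (((n:ℝ)^2 - (n:ℝ))/12)/(n:ℝ)^2 with hc3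
  rw [integral_add (f := fun t : ℝ => c1 * (t^m * (1-t)^(n-m)) + c2 * (t^(m+1) * (1-t)^(n-m)))
      (g := fun t : ℝ => c3 * (t^(m+2) * (1-t)^(n-m)))
      (((integrable_tpow m (n-m)).const_mul _).add
        ((integrable_tpow (m+1) (n-m)).const_mul _))
      ((integrable_tpow (m+2) (n-m)).const_mul _),
    integral_add (f := fun t : ℝ => c1 * (t^m * (1-t)^(n-m)))
      (g := fun t : ℝ => c2 * (t^(m+1) * (1-t)^(n-m)))
      ((integrable_tpow m (n-m)).const_mul _)
      ((integrable_tpow (m+1) (n-m)).const_mul _)]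
  rw [integral_const_mul, integral_const_mul, integral_const_mul]
  rw [beta_nat', beta_nat', beta_nat']
  rw [show m + (n-m) + 1 = n+1 from by omega, show m+1 + (n-m) + 1 = n+2 from by omega,
    show m+2 + (n-m) + 1 = n+3 from by omega]
  have hch : ((n.choose m : ℕ) : ℝ) * ((m.factorial : ℝ) * ((n-m).factorial : ℝ))
      = (n.factorial : ℝ) := by
    rw [← Nat.cast_mul, ← Nat.cast_mul, ← Nat.mul_assoc,
      Nat.choose_mul_factorial_mul_factorial hm]
  have hF1 : ((m.factorial : ℕ) : ℝ) ≠ 0 := by positivity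
  have hF2 : (((n-m).factorial : ℕ) : ℝ) ≠ 0 := by positivity
  have hF3 : ((n.factorial : ℕ) : ℝ) ≠ 0 := by positivity
  have hne : (n:ℝ) ≠ 0 := by positivity
  have h1 : ((n:ℝ)+1) ≠ 0 := by positivity
  have h2 : ((n:ℝ)+2) ≠ 0 := by positivity
  have h3 : ((n:ℝ)+3) ≠ 0 := by positivity
  have e1 : ((m+1).factorial : ℝ) = ((m:ℝ)+1) * (m.factorial : ℝ) := by
    rw [Nat.factorial_succ]; push_cast; ring
  have e2 : ((m+2).factorial : ℝ) = ((m:ℝ)+2) * (((m:ℝ)+1) * (m.factorial : ℝ)) := by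
    rw [show m+2 = (m+1)+1 from rfl, Nat.factorial_succ, ← e1]
    push_cast [e1]
    ring
  have f1 : ((n+1).factorial : ℝ) = ((n:ℝ)+1) * (n.factorial : ℝ) := by
    rw [Nat.factorial_succ]; push_cast; ring
  have f2 : ((n+2).factorial : ℝ) = ((n:ℝ)+2) * (((n:ℝ)+1) * (n.factorial : ℝ)) := by
    rw [show n+2 = (n+1)+1 from rfl, Nat.factorial_succ, ← f1]
    push_cast [f1]
    ring
  have f3 : ((n+3).factorial : ℝ) = ((n:ℝ)+3) * (((n:ℝ)+2) * (((n:ℝ)+1) * (n.factorial : ℝ))) := by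
    rw [show n+3 = (n+2)+1 from rfl, Nat.factorial_succ, ← f2]
    push_cast [f2]
    ring
  rw [e1, e2, f1, f2, f3, Gcl]
  have hcc : ((n.choose m : ℕ) : ℝ)
      = (n.factorial : ℝ) / ((m.factorial : ℝ) * ((n-m).factorial : ℝ)) := by
    rw [eq_div_iff (by positivity)]
    exact hch
  rw [hcc]
  simp only [hc1, hc2, hc3]
  field_simp


lemma ind_integrable {n : ℕ} (x : Fin n → ℝ) (j : ℕ) (hj : j ≤ n + 1) :
    IntegrableOn (fun t : ℝ => if Nle t x < j then (1:ℝ) else 0) (Set.Ioc (0:ℝ) 1) := by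
  have hvol : volume (Set.Ioc (0:ℝ) 1) < ⊤ := by
    rw [Real.volume_Ioc]
    exact ENNReal.ofReal_lt_top
  have hset : MeasurableSet {t : ℝ | Nle t x < j} := by
    rcases Nat.eq_zero_or_pos j with hj0 | hj0
    · have : {t : ℝ | Nle t x < j} = ∅ := by
        ext t; simp [hj0]
      rw [this]; exact MeasurableSet.empty
    · by_cases hjn : j ≤ n
      · rw [Nle_set_eq x j hj0 hjn]; exact measurableSet_Iio
      · have : {t : ℝ | Nle t x < j} = Set.univ := by
          ext t
          simp only [Set.mem_setOf_eq, Set.mem_univ, iff_true]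
          have := Nle_le t x
          omega
        rw [this]; exact MeasurableSet.univ
  have heq : (fun t : ℝ => if Nle t x < j then (1:ℝ) else 0)
      = {t : ℝ | Nle t x < j}.indicator (fun _ => (1:ℝ)) := by
    funext t
    rw [Set.indicator_apply]
    simp
  rw [heq]
  exact (integrableOn_const hvol.ne).indicator hset

lemma bracket_point {n k : ℕ} (hk : 1 ≤ k) (hkn : k ≤ n) (N : ℕ) :
    ((if N < k+1 then (1:ℝ) else 0) - 2*(if N < k then (1:ℝ) else 0)
      + (if N < k-1 then (1:ℝ) else 0))
    = (if N = k then (1:ℝ) else 0) - (if N = k-1 then (1:ℝ) else 0) := by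
  split_ifs <;> (try norm_num) <;> omega

lemma bracket_integral {n : ℕ} (hn : 1 ≤ n) {k : ℕ} (hk : 1 ≤ k) (hkn : k ≤ n)
    {x : Fin n → ℝ} (hx : x ∈ Set.Icc (0 : Fin n → ℝ) 1) :
    oStat x (k+1) - 2*oStat x k + oStat x (k-1)
    = ∫ t in Set.Ioc (0:ℝ) 1,
        ((if Nle t x = k then (1:ℝ) else 0) - (if Nle t x = k-1 then (1:ℝ) else 0)) := by
  rw [oStat_integral hx (k+1) (by omega), oStat_integral hx k (by omega),
    oStat_integral hx (k-1) (by omega)]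
  rw [← integral_const_mul]
  rw [← integral_sub ((ind_integrable x (k+1) (by omega)))
      ((ind_integrable x k (by omega)).const_mul 2),
    ← integral_add
      (f := fun t => (if Nle t x < k+1 then (1:ℝ) else 0) - 2*(if Nle t x < k then (1:ℝ) else 0))
      (g := fun t => (if Nle t x < k-1 then (1:ℝ) else 0))
      (((ind_integrable x (k+1) (by omega))).sub
        ((ind_integrable x k (by omega)).const_mul 2)) ((ind_integrable x (k-1) (by omega)))]
  apply setIntegral_congr_fun measurableSet_Ioc
  intro t _
  exact bracket_point hk hkn (Nle t x)



-- measurability of Nle as a joint function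
lemma Nle_joint_meas (n : ℕ) : Measurable (fun q : (Fin n → ℝ) × ℝ => Nle q.2 q.1) := by
  have : (fun q : (Fin n → ℝ) × ℝ => Nle q.2 q.1)
      = fun q => ∑ i : Fin n, if q.1 i ≤ q.2 then 1 else 0 := by
    funext q
    rw [Nle, Finset.card_filter]
  rw [this]
  apply Finset.measurable_sum
  intro i _
  apply Measurable.ite _ measurable_const measurable_const
  exact measurableSet_le (measurable_fst.eval) measurable_snd

lemma Nle_meas (n : ℕ) (t : ℝ) : Measurable (fun x : Fin n → ℝ => Nle t x) :=
  (Nle_joint_meas n).comp (measurable_id.prodMk measurable_const)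


theorem stmt19 (n : ℕ) (hn : 1 ≤ n) (k : ℕ) (hk : 1 ≤ k) (hkn : k ≤ n) :
    infl (fun x : Fin n → ℝ =>
        (1 / (n : ℝ)) * ∑ i, (x i - (1 / (n : ℝ)) * ∑ i', x i') ^ 2) k =
      ((n : ℝ) + 2) * (2 * (k : ℝ) - (n : ℝ) - 1) / ((n : ℝ) ^ 2 * ((n : ℝ) + 3)) := by
  unfold infl
  set f : (Fin n → ℝ) → ℝ :=
    fun x => (1/(n:ℝ)) * ∑ i, (x i - (1/(n:ℝ)) * ∑ i', x i')^2 with hf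
  have hfc : Continuous f := by
    rw [hf]
    apply continuous_const.mul
    apply continuous_finset_sum
    intro i _
    exact ((continuous_apply i).sub (continuous_const.mul
      (continuous_finset_sum _ fun i' _ => continuous_apply i'))).pow 2
  set w : ℝ → (Fin n → ℝ) → ℝ :=
    fun t x => (if Nle t x = k then (1:ℝ) else 0) - (if Nle t x = k-1 then (1:ℝ) else 0)
    with hw
  -- step 1: rewrite the inner bracket
  have step1 : ∫ x in Set.Icc (0:Fin n → ℝ) 1,
      f x * (oStat x (k+1) - 2*oStat x k + oStat x (k-1))
      = ∫ x in Set.Icc (0:Fin n → ℝ) 1, ∫ t in Set.Ioc (0:ℝ) 1, f x * w t x := by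
    apply setIntegral_congr_fun measurableSet_Icc
    intro x hx
    dsimp only
    rw [bracket_integral hn hk hkn hx, ← integral_const_mul]
  -- step 2: Fubini
  obtain ⟨C, hC⟩ := (isCompact_Icc (a := (0:Fin n → ℝ)) (b := 1)).exists_bound_of_continuousOn
    hfc.continuousOn
  have hwbound : ∀ t x, |w t x| ≤ 1 := by
    intro t x
    rw [hw]
    dsimp only
    split_ifs <;> norm_num
  have hmeasF : Measurable (fun q : (Fin n → ℝ) × ℝ => f q.1 * w q.2 q.1) := by
    apply Measurable.mul (hfc.measurable.comp measurable_fst)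
    rw [hw]
    apply Measurable.sub
    · exact Measurable.ite ((Nle_joint_meas n) (measurableSet_singleton k))
        measurable_const measurable_const
    · exact Measurable.ite ((Nle_joint_meas n) (measurableSet_singleton (k-1)))
        measurable_const measurable_const
  have hintF : Integrable (fun q : (Fin n → ℝ) × ℝ => f q.1 * w q.2 q.1)
      ((volume.restrict (Set.Icc (0:Fin n → ℝ) 1)).prod (volume.restrict (Set.Ioc (0:ℝ) 1))) := by
    haveI hfin1 : IsFiniteMeasure (volume.restrict (Set.Icc (0:Fin n → ℝ) 1)) := by
      constructor
      rw [Measure.restrict_apply_univ]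
      exact isCompact_Icc.measure_lt_top
    haveI hfin2 : IsFiniteMeasure (volume.restrict (Set.Ioc (0:ℝ) 1)) := by
      constructor
      rw [Measure.restrict_apply_univ, Real.volume_Ioc]
      exact ENNReal.ofReal_lt_top
    apply Integrable.mono' (g := fun _ => |C|) (integrable_const _)
      hmeasF.aestronglyMeasurable
    -- a.e. bound
    have hae : ∀ᵐ q : (Fin n → ℝ) × ℝ ∂((volume.restrict (Set.Icc (0:Fin n → ℝ) 1)).prod
        (volume.restrict (Set.Ioc (0:ℝ) 1))), q.1 ∈ Set.Icc (0:Fin n → ℝ) 1 := by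
      rw [ae_iff]
      have hset : {q : (Fin n → ℝ) × ℝ | ¬ q.1 ∈ Set.Icc (0:Fin n → ℝ) 1}
          = (Set.Icc (0:Fin n → ℝ) 1)ᶜ ×ˢ (Set.univ : Set ℝ) := by
        ext q
        simp [Set.mem_prod]
      rw [hset, Measure.prod_prod]
      rw [Measure.restrict_apply measurableSet_Icc.compl]
      simp
    filter_upwards [hae] with q hq
    have h1 : |f q.1| ≤ C := hC q.1 hq
    calc ‖f q.1 * w q.2 q.1‖ = |f q.1| * |w q.2 q.1| := abs_mul _ _
      _ ≤ |C| * 1 := by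
          apply mul_le_mul (le_trans h1 (le_abs_self C)) (hwbound _ _) (abs_nonneg _)
            (abs_nonneg _)
      _ = |C| := mul_one _
  have step2 : ∫ x in Set.Icc (0:Fin n → ℝ) 1, ∫ t in Set.Ioc (0:ℝ) 1, f x * w t x
      = ∫ t in Set.Ioc (0:ℝ) 1, ∫ x in Set.Icc (0:Fin n → ℝ) 1, f x * w t x :=
    integral_integral_swap hintF
  -- step 3: inner evaluation
  have hkn' : k - 1 ≤ n := by omega
  have step3 : ∫ t in Set.Ioc (0:ℝ) 1, ∫ x in Set.Icc (0:Fin n → ℝ) 1, f x * w t x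
      = ∫ t in Set.Ioc (0:ℝ) 1,
          ((n.choose k : ℝ) * (t^k * (1-t)^(n-k) * Psi n k t)
            - (n.choose (k-1) : ℝ) * (t^(k-1) * (1-t)^(n-(k-1)) * Psi n (k-1) t)) := by
    rw [integral_Ioc_eq_integral_Ioo, integral_Ioc_eq_integral_Ioo]
    apply setIntegral_congr_fun measurableSet_Ioo
    intro t ht
    have hsplit : ∀ x : Fin n → ℝ, f x * w t x
        = f x * (if Nle t x = k then (1:ℝ) else 0)
          - f x * (if Nle t x = k-1 then (1:ℝ) else 0) := by
      intro x
      rw [hw]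
      ring
    simp only [hsplit]
    have hint : ∀ m : ℕ, IntegrableOn
        (fun x : Fin n → ℝ => f x * (if Nle t x = m then (1:ℝ) else 0))
        (Set.Icc (0:Fin n → ℝ) 1) := by
      intro m
      have heq : (fun x : Fin n → ℝ => f x * (if Nle t x = m then (1:ℝ) else 0))
          = {x : Fin n → ℝ | Nle t x = m}.indicator f := by
        funext x
        rw [Set.indicator_apply]
        by_cases h : Nle t x = m
        · simp [h, Set.mem_setOf_eq]
        · simp [h, Set.mem_setOf_eq]
      rw [heq]
      exact ((hfc.continuousOn.integrableOn_compact isCompact_Icc)).indicator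
        ((Nle_meas n t) (measurableSet_singleton m))
    rw [integral_sub (hint k) (hint (k-1))]
    rw [slice_val n hn ht k, slice_val n hn ht (k-1)]
  -- step 4: t-integration
  have hgint : ∀ m : ℕ, IntegrableOn
      (fun t : ℝ => (n.choose m : ℝ) * (t^m * (1-t)^(n-m) * Psi n m t)) (Set.Ioc (0:ℝ) 1) := by
    intro m
    apply IntegrableOn.mono_set (t := Set.Icc (0:ℝ) 1)
    · apply (Continuous.continuousOn _).integrableOn_compact isCompact_Icc
      unfold Psi
      fun_prop
    · exact Set.Ioc_subset_Icc_self
  have step4 : ∫ t in Set.Ioc (0:ℝ) 1,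
      ((n.choose k : ℝ) * (t^k * (1-t)^(n-k) * Psi n k t)
        - (n.choose (k-1) : ℝ) * (t^(k-1) * (1-t)^(n-(k-1)) * Psi n (k-1) t))
      = Gcl n k - Gcl n (k-1) := by
    rw [integral_sub (hgint k) (hgint (k-1)), Gval n k hn hkn, Gval n (k-1) hn hkn']
  rw [step1, step2, step3, step4]
  have hck : ((k-1 : ℕ) : ℝ) = (k:ℝ) - 1 := by
    have : (1:ℕ) ≤ k := hk
    push_cast [Nat.cast_sub this]
    ring
  rw [Gcl, Gcl, hck]
  have hne : (n:ℝ) ≠ 0 := by positivity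
  have h1 : ((n:ℝ)+1) ≠ 0 := by positivity
  have h2 : ((n:ℝ)+2) ≠ 0 := by positivity
  have h3 : ((n:ℝ)+3) ≠ 0 := by positivity
  field_simp
  ring
end
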